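/- arXiv:2011.14269 — 5 statements merged into one kernel-verified Lean document; each statement's English description precedes it below -/
import Mathlib

section
/- Let P be a probability measure on a measurable space X and let V1, V2 : X → ℝ be bounded measurable functions. Define the Gibbs measures Q_i = e^{-V_i} P / ∫ e^{-V_i} dP for i = 1, 2. Then KL(Q1 ‖ Q2) ≤ 2 ‖V1 − V2‖_{L∞(P)}. -/
open MeasureTheory Real Filter

/-- The Gibbs (bias potential) distribution generated by potential `V` with base
distribution `P`: the measure with density `e^{-V} / ∫ e^{-V} dP` with respect to `P`. -/
noncomputable def gibbs {X : Type*} [MeasurableSpace X] (P : Measure X) (V : X → ℝ) :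
    Measure X :=
  P.withDensity fun x => ENNReal.ofReal (Real.exp (-V x) / ∫ y, Real.exp (-V y) ∂P)

/-- The Kullback–Leibler divergence `KL(Q₁‖Q₂) = ∫ log (dQ₁/dQ₂) dQ₁`. -/
noncomputable def klDiv {X : Type*} [MeasurableSpace X] (Q1 Q2 : Measure X) : ℝ :=
  ∫ x, Real.log ((Q1.rnDeriv Q2) x).toReal ∂Q1

/-- For bounded measurable potentials `V₁, V₂` and the associated Gibbs
measures `Qᵢ = e^{-Vᵢ} P / ∫ e^{-Vᵢ} dP`, one has `KL(Q₁‖Q₂) ≤ 2 ‖V₁ − V₂‖_{L∞(P)}`. -/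
theorem klDiv_gibbs_le {X : Type*} [MeasurableSpace X]
    (P : Measure X) [IsProbabilityMeasure P]
    (V1 V2 : X → ℝ) (hV1 : Measurable V1) (hV2 : Measurable V2)
    (hb1 : ∃ C : ℝ, ∀ x, |V1 x| ≤ C) (hb2 : ∃ C : ℝ, ∀ x, |V2 x| ≤ C) :
    klDiv (gibbs P V1) (gibbs P V2) ≤ 2 * essSup (fun x => |V1 x - V2 x|) P := by
  obtain ⟨C1, hC1⟩ := hb1
  obtain ⟨C2, hC2⟩ := hb2
  set Z1 := ∫ y, Real.exp (-V1 y) ∂P with hZ1def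
  set Z2 := ∫ y, Real.exp (-V2 y) ∂P with hZ2def
  set d := essSup (fun x => |V1 x - V2 x|) P with hddef
  -- integrability of exp(-V_i)
  have hint : ∀ (V : X → ℝ) (C : ℝ), Measurable V → (∀ x, |V x| ≤ C) →
      Integrable (fun x => Real.exp (-V x)) P := by
    intro V C hV hC
    refine (integrable_const (Real.exp C)).mono'
      (Real.measurable_exp.comp hV.neg).aestronglyMeasurable ?_
    filter_upwards with x
    rw [Real.norm_eq_abs, abs_of_pos (Real.exp_pos _)]
    exact Real.exp_le_exp.mpr (by have := abs_le.mp (hC x); linarith [this.1])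
  have hint1 := hint V1 C1 hV1 hC1
  have hint2 := hint V2 C2 hV2 hC2
  have hZ1pos : 0 < Z1 := by
    have h0 : Real.exp (-C1) ≤ Z1 := by
      calc Real.exp (-C1) = ∫ _, Real.exp (-C1) ∂P := by simp
        _ ≤ Z1 := integral_mono (integrable_const _) hint1
          (fun x => Real.exp_le_exp.mpr (by have := abs_le.mp (hC1 x); linarith [this.2]))
    linarith [Real.exp_pos (-C1)]
  have hZ2pos : 0 < Z2 := by
    have h0 : Real.exp (-C2) ≤ Z2 := by
      calc Real.exp (-C2) = ∫ _, Real.exp (-C2) ∂P := by simp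
        _ ≤ Z2 := integral_mono (integrable_const _) hint2
          (fun x => Real.exp_le_exp.mpr (by have := abs_le.mp (hC2 x); linarith [this.2]))
    linarith [Real.exp_pos (-C2)]
  -- the density functions
  set g1 : X → ENNReal := fun x => ENNReal.ofReal (Real.exp (-V1 x) / Z1) with hg1def
  set g2 : X → ENNReal := fun x => ENNReal.ofReal (Real.exp (-V2 x) / Z2) with hg2def
  have hg1meas : Measurable g1 :=
    (((Real.measurable_exp.comp hV1.neg).div_const Z1)).ennreal_ofReal
  have hg2meas : Measurable g2 :=
    (((Real.measurable_exp.comp hV2.neg).div_const Z2)).ennreal_ofReal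
  have hQ1eq : gibbs P V1 = P.withDensity g1 := rfl
  have hQ2eq : gibbs P V2 = P.withDensity g2 := rfl
  -- gibbs measures are probability measures
  have hprob : ∀ (V : X → ℝ) (Z : ℝ), Measurable V → 0 < Z →
      Integrable (fun x => Real.exp (-V x)) P → Z = ∫ y, Real.exp (-V y) ∂P →
      IsProbabilityMeasure (P.withDensity fun x => ENNReal.ofReal (Real.exp (-V x) / Z)) := by
    intro V Z hV hZ hI hZeq
    constructor
    rw [withDensity_apply _ MeasurableSet.univ, setLIntegral_univ]
    rw [← ofReal_integral_eq_lintegral_ofReal (hI.div_const Z)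
      (Filter.Eventually.of_forall fun x => div_nonneg (Real.exp_pos _).le hZ.le)]
    rw [integral_div, ← hZeq, div_self hZ.ne']
    simp
  have hP1 : IsProbabilityMeasure (gibbs P V1) := hprob V1 Z1 hV1 hZ1pos hint1 hZ1def
  have hP2 : IsProbabilityMeasure (gibbs P V2) := hprob V2 Z2 hV2 hZ2pos hint2 hZ2def
  have hQ1P : gibbs P V1 ≪ P := withDensity_absolutelyContinuous P g1
  -- rnDeriv computation
  have hg2ne0 : ∀ᵐ x ∂P, g2 x ≠ 0 := Filter.Eventually.of_forall fun x =>
    (ENNReal.ofReal_pos.mpr (div_pos (Real.exp_pos _) hZ2pos)).ne'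
  have hg2netop : ∀ᵐ x ∂P, g2 x ≠ ⊤ := Filter.Eventually.of_forall fun x =>
    ENNReal.ofReal_ne_top
  have h1 : (gibbs P V1).rnDeriv P =ᵐ[P] g1 := by
    rw [hQ1eq]; exact Measure.rnDeriv_withDensity P hg1meas
  have h2 : (gibbs P V1).rnDeriv (gibbs P V2) =ᵐ[P]
      fun x => (g2 x)⁻¹ * (gibbs P V1).rnDeriv P x := by
    rw [hQ2eq]
    exact Measure.rnDeriv_withDensity_right (gibbs P V1) P hg2meas.aemeasurable hg2ne0 hg2netop
  have hlog : ∀ᵐ x ∂P, Real.log (((gibbs P V1).rnDeriv (gibbs P V2)) x).toReal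
      = (V2 x - V1 x) + (Real.log Z2 - Real.log Z1) := by
    filter_upwards [h1, h2] with x hx1 hx2
    rw [hx2, hx1]
    simp only [hg1def, hg2def]
    rw [ENNReal.toReal_mul, ENNReal.toReal_inv, ENNReal.toReal_ofReal
      (div_nonneg (Real.exp_pos _).le hZ2pos.le), ENNReal.toReal_ofReal
      (div_nonneg (Real.exp_pos _).le hZ1pos.le)]
    rw [Real.log_mul (inv_ne_zero (div_pos (Real.exp_pos _) hZ2pos).ne')
      (div_pos (Real.exp_pos _) hZ1pos).ne', Real.log_inv,
      Real.log_div (Real.exp_ne_zero _) hZ2pos.ne',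
      Real.log_div (Real.exp_ne_zero _) hZ1pos.ne', Real.log_exp, Real.log_exp]
    ring
  have hlogQ1 : ∀ᵐ x ∂(gibbs P V1), Real.log (((gibbs P V1).rnDeriv (gibbs P V2)) x).toReal
      = (V2 x - V1 x) + (Real.log Z2 - Real.log Z1) := hQ1P.ae_le hlog
  -- ae bound by essSup
  have hbdd : IsBoundedUnder (· ≤ ·) (ae P) (fun x => |V1 x - V2 x|) :=
    isBoundedUnder_of ⟨C1 + C2, fun x => (abs_sub _ _).trans (add_le_add (hC1 x) (hC2 x))⟩
  have hdae : ∀ᵐ x ∂P, |V1 x - V2 x| ≤ d := ae_le_essSup hbdd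
  -- first term bound
  have hintQ1 : Integrable (fun x => V2 x - V1 x) (gibbs P V1) := by
    refine (integrable_const (C2 + C1)).mono'
      ((hV2.sub hV1).aestronglyMeasurable) ?_
    filter_upwards with x
    rw [Real.norm_eq_abs]
    exact (abs_sub _ _).trans (add_le_add (hC2 x) (hC1 x))
  have hterm1 : ∫ x, (V2 x - V1 x) ∂(gibbs P V1) ≤ d := by
    have hae : ∀ᵐ x ∂(gibbs P V1), V2 x - V1 x ≤ d := by
      filter_upwards [hQ1P.ae_le hdae] with x hx
      calc V2 x - V1 x ≤ |V1 x - V2 x| := by rw [abs_sub_comm]; exact le_abs_self _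
        _ ≤ d := hx
    calc ∫ x, (V2 x - V1 x) ∂(gibbs P V1) ≤ ∫ _, d ∂(gibbs P V1) :=
          integral_mono_ae hintQ1 (integrable_const d) hae
      _ = d := by simp
  -- second term bound
  have hterm2 : Real.log Z2 - Real.log Z1 ≤ d := by
    have hZle : Z2 ≤ Real.exp d * Z1 := by
      have hae : ∀ᵐ x ∂P, Real.exp (-V2 x) ≤ Real.exp d * Real.exp (-V1 x) := by
        filter_upwards [hdae] with x hx
        rw [← Real.exp_add]
        exact Real.exp_le_exp.mpr (by have := abs_le.mp hx; linarith [this.1, this.2])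
      calc Z2 ≤ ∫ x, Real.exp d * Real.exp (-V1 x) ∂P :=
            integral_mono_ae hint2 (hint1.const_mul _) hae
        _ = Real.exp d * Z1 := integral_const_mul _ _
    have := Real.log_le_log hZ2pos hZle
    rw [Real.log_mul (Real.exp_ne_zero _) hZ1pos.ne', Real.log_exp] at this
    linarith
  -- conclude
  have hKL : klDiv (gibbs P V1) (gibbs P V2)
      = ∫ x, ((V2 x - V1 x) + (Real.log Z2 - Real.log Z1)) ∂(gibbs P V1) :=
    integral_congr_ae hlogQ1
  rw [hKL, integral_add hintQ1 (integrable_const _), integral_const]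
  simp only [measure_univ, ENNReal.toReal_one, probReal_univ, one_smul, smul_eq_mul]
  linarith
end

section
/- Let K ⊆ ℝ^d be a compact set with positive Lebesgue measure, let P be the uniform probability measure on K, and let 𝒱 be a set of continuous functions on K that is dense in C(K) with the supremum norm. Then for every probability measure Q* on K that is absolutely continuous with respect to P with a continuous density, and for every ε > 0, there exists V ∈ 𝒱 such that KL(Q* ‖ Q_V) < ε, where Q_V is the probability measure with density e^{-V}/∫_K e^{-V} dP with respect to P. -/
open MeasureTheory Real
open scoped ENNReal NNReal

/-- **universal approximation in KL divergence.** Let `K ⊆ ℝ^d` be compact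
with positive Lebesgue measure, `P` the uniform probability measure on `K`, and `𝒱` a
class of continuous functions whose restrictions to `K` are dense in `C(K)` in the sup
norm. Then every probability measure `Q* = q · P` on `K` with continuous density `q`
can be approximated in KL divergence by Gibbs measures with potentials in `𝒱`:
for every `ε > 0` there is `V ∈ 𝒱` with `KL(Q*‖Q_V) < ε`. -/
theorem universal_approximation_kl {d : ℕ}
    (K : Set (Fin d → ℝ)) (hK : IsCompact K) (hKpos : 0 < volume K)
    (P : Measure (Fin d → ℝ)) (hP : P = (volume K)⁻¹ • volume.restrict K)
    (𝒱 : Set ((Fin d → ℝ) → ℝ)) (h𝒱 : ∀ V ∈ 𝒱, Continuous V)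
    (hdense : ∀ g : (Fin d → ℝ) → ℝ, ContinuousOn g K →
      ∀ ε > (0 : ℝ), ∃ V ∈ 𝒱, ∀ x ∈ K, |V x - g x| < ε)
    (Qstar : Measure (Fin d → ℝ)) [IsProbabilityMeasure Qstar]
    (q : (Fin d → ℝ) → ℝ) (hq : ContinuousOn q K)
    (hQ : Qstar = P.withDensity fun x => ENNReal.ofReal (q x))
    (ε : ℝ) (hε : 0 < ε) :
    ∃ V ∈ 𝒱, klDiv Qstar (gibbs P V) < ε := by
  have hKm : MeasurableSet K := hK.isClosed.measurableSet
  have hKfin : volume K ≠ ∞ := hK.measure_lt_top.ne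
  -- P is a probability measure
  haveI hPprob : IsProbabilityMeasure P := by
    constructor
    rw [hP, Measure.smul_apply, Measure.restrict_apply MeasurableSet.univ,
      Set.univ_inter, smul_eq_mul, ENNReal.inv_mul_cancel hKpos.ne' hKfin]
  -- a.e. point of P is in K
  have aeK : ∀ᵐ x ∂P, x ∈ K := by
    rw [ae_iff]
    have : {a | ¬ a ∈ K} = Kᶜ := rfl
    rw [this, hP, Measure.smul_apply, Measure.restrict_apply hKm.compl]
    simp
  -- measurability of q w.r.t. P
  have hqmeas : AEMeasurable q P := by
    rw [hP]
    exact AEMeasurable.smul_measure (hq.aemeasurable hKm) _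
  -- the nonnegative part of q
  set qp : (Fin d → ℝ) → ℝ := fun x => max (q x) 0 with hqp_def
  have hqp_nonneg : ∀ x, 0 ≤ qp x := fun x => le_max_right _ _
  have hqp : ContinuousOn qp K := hq.sup continuousOn_const
  have hofReal : ∀ x, ENNReal.ofReal (q x) = ENNReal.ofReal (qp x) := by
    intro x
    rcases le_total (q x) 0 with h | h
    · rw [ENNReal.ofReal_eq_zero.mpr h, hqp_def]
      simp [max_eq_right h]
    · rw [hqp_def]; simp [max_eq_left h]
  set fQ : (Fin d → ℝ) → ℝ≥0∞ := fun x => ENNReal.ofReal (q x) with hfQ_def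
  have hfQmeas : AEMeasurable fQ P := ENNReal.measurable_ofReal.comp_aemeasurable hqmeas
  have hQ' : Qstar = P.withDensity fQ := hQ
  -- integrability and total mass of qp
  have hqpInt : Integrable qp P := by
    rw [hP]
    exact (hqp.integrableOn_compact hK).smul_measure (ENNReal.inv_ne_top.mpr hKpos.ne')
  have Iqp : ∫ x, qp x ∂P = 1 := by
    have h1 : ENNReal.ofReal (∫ x, qp x ∂P) = ∫⁻ x, ENNReal.ofReal (qp x) ∂P :=
      ofReal_integral_eq_lintegral_ofReal hqpInt (ae_of_all _ hqp_nonneg)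
    have h2 : ∫⁻ x, ENNReal.ofReal (qp x) ∂P = Qstar Set.univ := by
      rw [hQ', withDensity_apply _ MeasurableSet.univ, Measure.restrict_univ]
      exact lintegral_congr fun x => (hofReal x).symm
    rw [measure_univ] at h2
    rw [h2] at h1
    have := ENNReal.ofReal_eq_one.mp h1
    linarith
  -- parameters
  set δ : ℝ := ε / 8 with hδ_def
  set η : ℝ := ε / 8 with hη_def
  have hδpos : 0 < δ := by positivity
  have hηpos : 0 < η := by positivity
  -- the target potential g = -log(qp + δ)
  set g : (Fin d → ℝ) → ℝ := fun x => -Real.log (qp x + δ) with hg_def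
  have hgpos : ∀ x ∈ K, qp x + δ ≠ 0 := fun x _ => by
    have := hqp_nonneg x; positivity
  have hg : ContinuousOn g K := ((hqp.add continuousOn_const).log hgpos).neg
  obtain ⟨V, hV𝒱, hVg⟩ := hdense g hg η hηpos
  refine ⟨V, hV𝒱, ?_⟩
  have hVc : Continuous V := h𝒱 V hV𝒱
  -- the normalization constant
  set Z : ℝ := ∫ y, Real.exp (-V y) ∂P with hZ_def
  have hZint : Integrable (fun y => Real.exp (-V y)) P := by
    rw [hP]
    exact ((hVc.neg.rexp).continuousOn.integrableOn_compact hK).smul_measure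
      (ENNReal.inv_ne_top.mpr hKpos.ne')
  obtain ⟨C, hC⟩ : ∃ C, ∀ x ∈ K, ‖V x‖ ≤ C := hK.exists_bound_of_continuousOn hVc.continuousOn
  have hZpos : 0 < Z := by
    have h1 : ∫ _ : Fin d → ℝ, Real.exp (-C) ∂P = Real.exp (-C) := by
      simp [measure_univ]
    have h2 : (∫ _ : Fin d → ℝ, Real.exp (-C) ∂P) ≤ Z := by
      refine integral_mono_ae (integrable_const _) hZint ?_
      filter_upwards [aeK] with x hx
      have : V x ≤ C := (le_abs_self _).trans (hC x hx)
      exact Real.exp_le_exp.2 (by linarith)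
    calc (0:ℝ) < Real.exp (-C) := Real.exp_pos _
    _ = ∫ _ : Fin d → ℝ, Real.exp (-C) ∂P := h1.symm
    _ ≤ Z := h2
  have hZub : Z ≤ Real.exp η * (1 + δ) := by
    have h2 : Z ≤ ∫ x, Real.exp η * (qp x + δ) ∂P := by
      refine integral_mono_ae hZint (((hqpInt.add (integrable_const δ)).const_mul _)) ?_
      filter_upwards [aeK] with x hx
      have h3 : -V x ≤ η + Real.log (qp x + δ) := by
        have := (abs_lt.1 (hVg x hx)).1
        rw [hg_def] at this
        simp only at this
        linarith
      calc Real.exp (-V x) ≤ Real.exp (η + Real.log (qp x + δ)) := Real.exp_le_exp.2 h3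
      _ = Real.exp η * (qp x + δ) := by
          rw [Real.exp_add, Real.exp_log]
          have := hqp_nonneg x; positivity
    calc Z ≤ ∫ x, Real.exp η * (qp x + δ) ∂P := h2
    _ = Real.exp η * (1 + δ) := by
        rw [integral_const_mul, integral_add hqpInt (integrable_const δ), Iqp]
        simp [measure_univ]
  have hlogZ : Real.log Z ≤ η + Real.log (1 + δ) := by
    calc Real.log Z ≤ Real.log (Real.exp η * (1 + δ)) := Real.log_le_log hZpos hZub
    _ = η + Real.log (1 + δ) := by
        rw [Real.log_mul (Real.exp_ne_zero _) (by positivity), Real.log_exp]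
  -- the Gibbs measure as a withDensity
  set w : (Fin d → ℝ) → ℝ≥0∞ := fun x => ENNReal.ofReal (Real.exp (-V x) / Z) with hw_def
  have hwmeas : Measurable w := (hVc.neg.rexp.div_const Z).measurable.ennreal_ofReal
  have hwpos : ∀ x, w x ≠ 0 := fun x => by
    rw [hw_def]
    simp only [ne_eq, ENNReal.ofReal_eq_zero, not_le]
    positivity
  have hwfin : ∀ x, w x ≠ ∞ := fun x => ENNReal.ofReal_ne_top
  have hgibbs : gibbs P V = P.withDensity w := rfl
  set QV : Measure (Fin d → ℝ) := P.withDensity w with hQV_def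
  haveI : IsFiniteMeasure QV := by
    refine isFiniteMeasure_withDensity ?_
    rw [← ofReal_integral_eq_lintegral_ofReal (hZint.div_const Z)
      (ae_of_all _ fun x => by positivity)]
    exact ENNReal.ofReal_ne_top
  -- identify the Radon-Nikodym derivative
  set u : (Fin d → ℝ) → ℝ≥0∞ := fun x => fQ x / w x with hu_def
  have humeas : AEMeasurable u P := hfQmeas.div hwmeas.aemeasurable
  have habs : Qstar ≪ QV := by
    rw [hQ']
    exact (withDensity_absolutelyContinuous P fQ).trans
      (withDensity_absolutelyContinuous' hwmeas.aemeasurable (ae_of_all _ hwpos))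
  have hQstar_eq : Qstar = QV.withDensity u := by
    rw [hQ', hQV_def, ← withDensity_mul₀ hwmeas.aemeasurable humeas]
    congr 1
    funext x
    show fQ x = w x * (fQ x / w x)
    exact (ENNReal.mul_div_cancel (hwpos x) (hwfin x)).symm
  have hrnQV : Qstar.rnDeriv QV =ᵐ[QV] u := by
    rw [hQstar_eq]
    exact Measure.rnDeriv_withDensity₀ QV (humeas.mono_ac (withDensity_absolutelyContinuous P w))
  have hrn : Qstar.rnDeriv QV =ᵐ[Qstar] u := habs.ae_eq hrnQV
  -- compute toReal of u
  set R : (Fin d → ℝ) → ℝ := fun x => qp x / (Real.exp (-V x) / Z) with hR_def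
  have hutoReal : ∀ x, (u x).toReal = R x := by
    intro x
    rw [hu_def]
    simp only
    rw [ENNReal.toReal_div, hfQ_def]
    simp only
    rw [hofReal x, ENNReal.toReal_ofReal (hqp_nonneg x),
      ENNReal.toReal_ofReal (by positivity : (0:ℝ) ≤ Real.exp (-V x) / Z)]
  -- rewrite the KL divergence as an integral against P
  have hkl : klDiv Qstar (gibbs P V) = ∫ x, qp x * Real.log (R x) ∂P := by
    rw [hgibbs, klDiv]
    have step1 : ∫ x, Real.log ((Qstar.rnDeriv (P.withDensity w)) x).toReal ∂Qstar
        = ∫ x, Real.log (R x) ∂Qstar := by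
      refine integral_congr_ae ?_
      filter_upwards [hrn] with x hx
      rw [hx, hutoReal x]
    have hf' : AEMeasurable (fun y => (q y).toNNReal) P :=
      measurable_real_toNNReal.comp_aemeasurable hqmeas
    have hQ'' : Qstar = P.withDensity fun x => (((q x).toNNReal : ℝ≥0) : ℝ≥0∞) := hQ'
    have step2 : ∫ x, Real.log (R x) ∂Qstar
        = ∫ x, ((q x).toNNReal : ℝ≥0) • Real.log (R x) ∂P := by
      rw [hQ'']
      exact integral_withDensity_eq_integral_smul₀ hf' _
    rw [step1, step2]
    refine integral_congr_ae (ae_of_all _ fun x => ?_)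
    show (q x).toNNReal • Real.log (R x) = qp x * Real.log (R x)
    rw [NNReal.smul_def, Real.coe_toNNReal']
    rfl
  rw [hkl]
  -- the pointwise bound
  set B : ℝ := 2 * η + Real.log (1 + δ) with hB_def
  have hbound : ∀ᵐ x ∂P, qp x * Real.log (R x) ≤ qp x * B := by
    filter_upwards [aeK] with x hx
    rcases (hqp_nonneg x).lt_or_eq with hpos | hzero
    · refine mul_le_mul_of_nonneg_left ?_ (hqp_nonneg x)
      have hRlog : Real.log (R x) = Real.log (qp x) + V x + Real.log Z := by
        rw [hR_def]
        simp only
        rw [Real.log_div hpos.ne' (by positivity),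
          Real.log_div (Real.exp_ne_zero _) hZpos.ne', Real.log_exp]
        ring
      have h1 : V x ≤ η - Real.log (qp x + δ) := by
        have := (abs_lt.1 (hVg x hx)).2
        rw [hg_def] at this
        simp only at this
        linarith
      have h2 : Real.log (qp x) ≤ Real.log (qp x + δ) :=
        Real.log_le_log hpos (by linarith)
      rw [hRlog, hB_def]
      linarith
    · rw [← hzero]
      simp
  by_cases hFint : Integrable (fun x => qp x * Real.log (R x)) P
  · have h1 : ∫ x, qp x * Real.log (R x) ∂P ≤ ∫ x, qp x * B ∂P :=
      integral_mono_ae hFint (hqpInt.mul_const B) hbound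
    have h2 : ∫ x, qp x * B ∂P = B := by
      rw [integral_mul_const, Iqp, one_mul]
    have h3 : Real.log (1 + δ) ≤ δ := by
      have := Real.log_le_sub_one_of_pos (by positivity : (0:ℝ) < 1 + δ)
      linarith
    rw [h2] at h1
    calc ∫ x, qp x * Real.log (R x) ∂P ≤ B := h1
    _ < ε := by rw [hB_def, hδ_def, hη_def] at *; linarith
  · rw [integral_undef hFint]
    exact hε
end

section
/- Let K ⊆ ℝ^d be a compact set with positive Lebesgue measure, let P be the uniform probability measure on K, and let 𝒱 be a set of continuous functions on K that is dense in C(K) with the supremum norm. Then for every probability measure Q* on K that is absolutely continuous with respect to Lebesgue measure, and for every ε > 0, there exists V ∈ 𝒱 such that the total variation distance between Q* and Q_V is less than ε, where Q_V is the probability measure with density e^{-V}/∫_K e^{-V} dP with respect to P. -/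
open MeasureTheory Real

/-- The total variation distance `sup_A |Q₁(A) − Q₂(A)|` between two (finite) measures. -/
noncomputable def tvDist {X : Type*} [MeasurableSpace X] (Q1 Q2 : Measure X) : ℝ :=
  ⨆ A : {A : Set X // MeasurableSet A}, |(Q1 A).toReal - (Q2 A).toReal|

lemma tvDist_le_L1 {X : Type*} [MeasurableSpace X] (P : Measure X) (f g : X → ℝ)
    (hf : Integrable f P) (hg : Integrable g P) (hf0 : ∀ x, 0 ≤ f x) (hg0 : ∀ x, 0 ≤ g x) :
    tvDist (P.withDensity fun x => ENNReal.ofReal (f x))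
      (P.withDensity fun x => ENNReal.ofReal (g x)) ≤ ∫ x, |f x - g x| ∂P := by
  have hne : Nonempty {A : Set X // MeasurableSet A} := ⟨⟨∅, MeasurableSet.empty⟩⟩
  refine ciSup_le fun A => ?_
  obtain ⟨A, hA⟩ := A
  have hmf : ((P.withDensity fun x => ENNReal.ofReal (f x)) A).toReal = ∫ x in A, f x ∂P := by
    rw [withDensity_apply _ hA,
      ← ofReal_integral_eq_lintegral_ofReal hf.integrableOn (ae_of_all _ hf0),
      ENNReal.toReal_ofReal (integral_nonneg fun x => hf0 x)]
  have hmg : ((P.withDensity fun x => ENNReal.ofReal (g x)) A).toReal = ∫ x in A, g x ∂P := by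
    rw [withDensity_apply _ hA,
      ← ofReal_integral_eq_lintegral_ofReal hg.integrableOn (ae_of_all _ hg0),
      ENNReal.toReal_ofReal (integral_nonneg fun x => hg0 x)]
  rw [hmf, hmg, ← integral_sub hf.integrableOn hg.integrableOn]
  have h1 : |∫ x in A, (f x - g x) ∂P| ≤ ∫ x in A, |f x - g x| ∂P := by
    simpa [Real.norm_eq_abs] using
      norm_integral_le_integral_norm (μ := P.restrict A) (f := fun x => f x - g x)
  exact h1.trans (setIntegral_le_integral (hf.sub hg).abs (ae_of_all _ fun x => abs_nonneg _))

set_option maxHeartbeats 2000000 in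
/-- **universal approximation in total variation.** Let `K ⊆ ℝ^d` be compact
with positive Lebesgue measure, `P` the uniform probability measure on `K`, and `𝒱` a
class of continuous functions whose restrictions to `K` are dense in `C(K)` in the sup
norm. Then every probability measure `Q*` on `K` absolutely continuous with respect to
Lebesgue measure can be approximated in total variation distance by Gibbs measures with
potentials in `𝒱`. -/
theorem universal_approximation_tv {d : ℕ}
    (K : Set (Fin d → ℝ)) (hK : IsCompact K) (hKpos : 0 < volume K)
    (P : Measure (Fin d → ℝ)) (hP : P = (volume K)⁻¹ • volume.restrict K)
    (𝒱 : Set ((Fin d → ℝ) → ℝ)) (h𝒱 : ∀ V ∈ 𝒱, Continuous V)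
    (hdense : ∀ g : (Fin d → ℝ) → ℝ, ContinuousOn g K →
      ∀ ε > (0 : ℝ), ∃ V ∈ 𝒱, ∀ x ∈ K, |V x - g x| < ε)
    (Qstar : Measure (Fin d → ℝ)) [IsProbabilityMeasure Qstar]
    (hQK : Qstar Kᶜ = 0) (hac : Qstar ≪ volume)
    (ε : ℝ) (hε : 0 < ε) :
    ∃ V ∈ 𝒱, tvDist Qstar (gibbs P V) < ε := by
  have hKm : MeasurableSet K := hK.isClosed.measurableSet
  have hKfin : volume K ≠ ⊤ := hK.measure_lt_top.ne
  -- P is a probability measure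
  have hPprob : IsProbabilityMeasure P := by
    constructor
    rw [hP, Measure.smul_apply, Measure.restrict_apply MeasurableSet.univ, Set.univ_inter,
      smul_eq_mul, ENNReal.inv_mul_cancel hKpos.ne' hKfin]
  -- Qstar ≪ P
  have hQP : Qstar ≪ P := by
    intro A hA
    rw [hP, Measure.smul_apply, smul_eq_mul] at hA
    have hvol : volume (A ∩ K) = 0 := by
      have := (mul_eq_zero.mp hA).resolve_left (by simp [hKpos.ne', hKfin])
      rwa [Measure.restrict_apply' hKm] at this
    have h1 : Qstar (A ∩ K) = 0 := hac hvol
    have h2 : Qstar A ≤ Qstar (A ∩ K) + Qstar Kᶜ :=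
      (measure_mono (by intro x hx; by_cases h : x ∈ K <;> simp [hx, h])).trans
        (measure_union_le _ _)
    simpa [h1, hQK] using (le_antisymm (by simpa [h1, hQK] using h2) zero_le)
  -- a.e. x ∈ K for P
  have hPK : ∀ᵐ x ∂P, x ∈ K := by
    rw [ae_iff]
    have : {x | ¬ x ∈ K} = Kᶜ := rfl
    rw [this, hP, Measure.smul_apply, Measure.restrict_apply' hKm]
    simp
  -- the density of Qstar w.r.t. P
  set f : (Fin d → ℝ) → ℝ := fun x => (Qstar.rnDeriv P x).toReal with hfdef
  have hf0 : ∀ x, 0 ≤ f x := fun x => ENNReal.toReal_nonneg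
  have hf_int : Integrable f P := Measure.integrable_toReal_rnDeriv
  have hfrep : Qstar = P.withDensity fun x => ENNReal.ofReal (f x) := by
    haveI : Qstar.HaveLebesgueDecomposition P :=
      Measure.haveLebesgueDecomposition_of_finiteMeasure
    conv_lhs => rw [← Measure.withDensity_rnDeriv_eq Qstar P hQP]
    refine withDensity_congr_ae ?_
    filter_upwards [Qstar.rnDeriv_lt_top P] with x hx
    rw [hfdef, ENNReal.ofReal_toReal hx.ne]
  have hf1 : ∫ x, f x ∂P = 1 := by
    rw [hfdef, Measure.integral_toReal_rnDeriv hQP]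
    simp
  -- the small parameter
  set ε' : ℝ := ε / 6 with hε'def
  have hε' : 0 < ε' := by positivity
  -- continuous approximation of the density
  obtain ⟨g, hg_close, hg_int⟩ := hf_int.exists_boundedContinuous_integral_sub_le hε'
  set g₀ : (Fin d → ℝ) → ℝ := fun x => max (g x) ε' with hg₀def
  have hg₀cont : Continuous g₀ := g.continuous.max continuous_const
  have hg₀pos : ∀ x, ε' ≤ g₀ x := fun x => le_max_right _ _
  have hg₀0 : ∀ x, 0 ≤ g₀ x := fun x => hε'.le.trans (hg₀pos x)
  have hg₀_int : Integrable g₀ P := hg_int.sup (integrable_const _)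
  have hint_fg : Integrable (fun x => |f x - g x|) P := (hf_int.sub hg_int).abs
  have hint_fg0 : Integrable (fun x => |f x - g₀ x|) P := (hf_int.sub hg₀_int).abs
  -- L¹ distance from f to g₀
  have hfg₀ : ∫ x, |f x - g₀ x| ∂P ≤ 2 * ε' := by
    have hpt : ∀ x, |f x - g₀ x| ≤ |f x - g x| + ε' := by
      intro x
      rcases le_or_gt ε' (g x) with h | h
      · simp [hg₀def, max_eq_left h, le_add_of_nonneg_right hε'.le]
      · rw [hg₀def]
        simp only [max_eq_right h.le]
        rcases le_or_gt ε' (f x) with h2 | h2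
        · rw [abs_of_nonneg (by linarith)]
          have : g x < f x := lt_of_lt_of_le h h2
          rw [abs_of_pos (by linarith)]
          linarith
        · rw [abs_of_nonpos (by linarith)]
          have := abs_nonneg (f x - g x)
          linarith [hf0 x]
    calc ∫ x, |f x - g₀ x| ∂P ≤ ∫ x, (|f x - g x| + ε') ∂P :=
          integral_mono hint_fg0 (hint_fg.add (integrable_const _)) hpt
      _ = (∫ x, |f x - g x| ∂P) + ε' := by
          rw [integral_add hint_fg (integrable_const _)]
          simp
      _ ≤ ε' + ε' := by
          have : ∫ x, |f x - g x| ∂P ≤ ε' := by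
            simpa [Real.norm_eq_abs] using hg_close
          linarith
      _ = 2 * ε' := by ring
  -- the normalization of g₀
  set Z : ℝ := ∫ x, g₀ x ∂P with hZdef
  have hZlb : ε' ≤ Z := by
    calc ε' = ∫ _x, ε' ∂P := by simp
      _ ≤ Z := integral_mono (integrable_const _) hg₀_int hg₀pos
  have hZpos : 0 < Z := lt_of_lt_of_le hε' hZlb
  have hZ1 : |Z - 1| ≤ 2 * ε' := by
    have heq : Z - 1 = ∫ x, (g₀ x - f x) ∂P := by
      rw [integral_sub hg₀_int hf_int, hf1, hZdef]
    rw [heq]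
    have h1 : |∫ x, (g₀ x - f x) ∂P| ≤ ∫ x, |g₀ x - f x| ∂P := by
      simpa [Real.norm_eq_abs] using
        norm_integral_le_integral_norm (μ := P) (f := fun x => g₀ x - f x)
    refine h1.trans (le_trans (le_of_eq ?_) hfg₀)
    exact integral_congr_ae (ae_of_all _ fun x => abs_sub_comm _ _)
  -- the potential W = -log g₀ and its approximation in 𝒱
  set W : (Fin d → ℝ) → ℝ := fun x => -Real.log (g₀ x) with hWdef
  have hWcont : Continuous W := by
    exact (hg₀cont.log fun x => (lt_of_lt_of_le hε' (hg₀pos x)).ne').neg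
  set η : ℝ := Real.log (1 + ε') / 2 with hηdef
  have hη : 0 < η := by
    have : (0 : ℝ) < Real.log (1 + ε') := Real.log_pos (by linarith)
    positivity
  have hexp2η : Real.exp (2 * η) = 1 + ε' := by
    rw [hηdef]
    rw [show 2 * (Real.log (1 + ε') / 2) = Real.log (1 + ε') by ring,
      Real.exp_log (by linarith)]
  obtain ⟨V, hV𝒱, hVW⟩ := hdense W hWcont.continuousOn η hη
  refine ⟨V, hV𝒱, ?_⟩
  -- exp(-V) bounds on K
  have hEub : ∀ x ∈ K, Real.exp (-V x) ≤ Real.exp η * g₀ x := by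
    intro x hx
    have h := (abs_lt.mp (hVW x hx)).1
    have hle : -V x ≤ Real.log (g₀ x) + η := by
      rw [hWdef] at h; simp only at h; linarith
    calc Real.exp (-V x) ≤ Real.exp (Real.log (g₀ x) + η) := Real.exp_le_exp.mpr hle
      _ = Real.exp η * g₀ x := by
          rw [Real.exp_add, Real.exp_log (lt_of_lt_of_le hε' (hg₀pos x))]; ring
  have hElb : ∀ x ∈ K, Real.exp (-η) * g₀ x ≤ Real.exp (-V x) := by
    intro x hx
    have h := (abs_lt.mp (hVW x hx)).2
    have hle : Real.log (g₀ x) - η ≤ -V x := by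
      rw [hWdef] at h; simp only at h; linarith
    calc Real.exp (-η) * g₀ x = Real.exp (Real.log (g₀ x) - η) := by
          rw [Real.exp_sub, Real.exp_log (lt_of_lt_of_le hε' (hg₀pos x)), Real.exp_neg]
          ring
      _ ≤ Real.exp (-V x) := Real.exp_le_exp.mpr hle
  -- integrability of exp(-V)
  have hVcont : Continuous V := h𝒱 V hV𝒱
  have hEcont : Continuous fun x => Real.exp (-V x) := Real.continuous_exp.comp hVcont.neg
  have hE_int : Integrable (fun x => Real.exp (-V x)) P := by
    rw [hP]
    refine Integrable.smul_measure ?_ (by simp [hKpos.ne'])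
    exact hEcont.continuousOn.integrableOn_compact hK
  -- bounds on the partition function
  set ZV : ℝ := ∫ y, Real.exp (-V y) ∂P with hZVdef
  have hZVub : ZV ≤ Real.exp η * Z := by
    calc ZV ≤ ∫ x, Real.exp η * g₀ x ∂P := by
          refine integral_mono_ae hE_int (hg₀_int.const_mul _) ?_
          filter_upwards [hPK] with x hx using hEub x hx
      _ = Real.exp η * Z := by rw [integral_const_mul]
  have hZVlb : Real.exp (-η) * Z ≤ ZV := by
    calc Real.exp (-η) * Z = ∫ x, Real.exp (-η) * g₀ x ∂P := by rw [integral_const_mul]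
      _ ≤ ZV := by
          refine integral_mono_ae (hg₀_int.const_mul _) hE_int ?_
          filter_upwards [hPK] with x hx using hElb x hx
  have hZVpos : 0 < ZV := lt_of_lt_of_le (mul_pos (Real.exp_pos _) hZpos) hZVlb
  -- the key L¹ bound
  have hint1 : Integrable (fun x => g₀ x / Z) P := hg₀_int.div_const _
  have hint2 : Integrable (fun x => Real.exp (-V x) / ZV) P := hE_int.div_const _
  have hintB : Integrable (fun x => |g₀ x - g₀ x / Z|) P := (hg₀_int.sub hint1).abs
  have hintC : Integrable (fun x => |g₀ x / Z - Real.exp (-V x) / ZV|) P :=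
    (hint1.sub hint2).abs
  have hintD : Integrable (fun x => |f x - Real.exp (-V x) / ZV|) P := (hf_int.sub hint2).abs
  have hterm2 : ∫ x, |g₀ x - g₀ x / Z| ∂P ≤ 2 * ε' := by
    have heq : ∀ x, |g₀ x - g₀ x / Z| = |1 - 1/Z| * g₀ x := by
      intro x
      rw [show g₀ x - g₀ x / Z = (1 - 1/Z) * g₀ x by field_simp, abs_mul,
        abs_of_nonneg (hg₀0 x)]
    calc ∫ x, |g₀ x - g₀ x / Z| ∂P = |1 - 1/Z| * Z := by
          rw [integral_congr_ae (ae_of_all _ heq), integral_const_mul]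
      _ = |(1 - 1/Z) * Z| := by rw [abs_mul, abs_of_pos hZpos]
      _ = |Z - 1| := by congr 1; field_simp
      _ ≤ 2 * ε' := hZ1
  have hterm3 : ∫ x, |g₀ x / Z - Real.exp (-V x) / ZV| ∂P ≤ ε' := by
    have hpt : ∀ᵐ x ∂P, |g₀ x / Z - Real.exp (-V x) / ZV|
        ≤ (Real.exp (2*η) - 1) * (g₀ x / Z) := by
      filter_upwards [hPK] with x hx
      have ht : 0 < g₀ x := lt_of_lt_of_le hε' (hg₀pos x)
      have hub : Real.exp (-V x) / ZV ≤ Real.exp (2*η) * (g₀ x / Z) := by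
        have h1 : Real.exp (-V x) / ZV ≤ (Real.exp η * g₀ x) / (Real.exp (-η) * Z) :=
          div_le_div₀ (by positivity) (hEub x hx)
            (mul_pos (Real.exp_pos _) hZpos) hZVlb
        refine h1.trans (le_of_eq ?_)
        rw [show (2:ℝ)*η = η - (-η) by ring, Real.exp_sub]
        field_simp
      have hlb : Real.exp (-(2*η)) * (g₀ x / Z) ≤ Real.exp (-V x) / ZV := by
        have h1 : (Real.exp (-η) * g₀ x) / (Real.exp η * Z) ≤ Real.exp (-V x) / ZV :=
          div_le_div₀ (by positivity) (hElb x hx) hZVpos hZVub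
        refine le_trans (le_of_eq ?_) h1
        rw [show -((2:ℝ)*η) = -η - η by ring, Real.exp_sub]
        field_simp
      have hee : Real.exp (2*η) * Real.exp (-(2*η)) = 1 := by
        rw [← Real.exp_add]; simp
      have he1 : (1:ℝ) ≤ Real.exp (2*η) := by
        rw [Real.one_le_exp_iff]; positivity
      have hB : 0 < g₀ x / Z := by positivity
      rw [abs_le]
      constructor
      · have hep : 0 < Real.exp (-(2*η)) := Real.exp_pos _
        nlinarith [hlb, mul_pos hep hB]
      · nlinarith [hub]
    calc ∫ x, |g₀ x / Z - Real.exp (-V x) / ZV| ∂P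
        ≤ ∫ x, (Real.exp (2*η) - 1) * (g₀ x / Z) ∂P :=
          integral_mono_ae hintC (hint1.const_mul _) hpt
      _ = (Real.exp (2*η) - 1) * (Z / Z) := by
          rw [integral_const_mul, integral_div]
      _ = ε' := by
          rw [hexp2η, div_self hZpos.ne']
          ring
  have hintBC : Integrable
      (fun x => |g₀ x - g₀ x / Z| + |g₀ x / Z - Real.exp (-V x) / ZV|) P := hintB.add hintC
  have hintABC : Integrable
      (fun x => |f x - g₀ x| + (|g₀ x - g₀ x / Z| + |g₀ x / Z - Real.exp (-V x) / ZV|)) P :=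
    hint_fg0.add hintBC
  have hptw : ∀ x, |f x - Real.exp (-V x) / ZV|
      ≤ |f x - g₀ x| + (|g₀ x - g₀ x / Z| + |g₀ x / Z - Real.exp (-V x) / ZV|) := by
    intro x
    have t1 := abs_sub_le (f x) (g₀ x) (Real.exp (-V x) / ZV)
    have t2 := abs_sub_le (g₀ x) (g₀ x / Z) (Real.exp (-V x) / ZV)
    linarith
  have hkey : ∫ x, |f x - Real.exp (-V x) / ZV| ∂P ≤ 5 * ε' := by
    calc ∫ x, |f x - Real.exp (-V x) / ZV| ∂P
        ≤ ∫ x, (|f x - g₀ x| + (|g₀ x - g₀ x / Z| + |g₀ x / Z - Real.exp (-V x) / ZV|)) ∂P :=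
          integral_mono hintD hintABC hptw
      _ = (∫ x, |f x - g₀ x| ∂P) + ((∫ x, |g₀ x - g₀ x / Z| ∂P)
            + ∫ x, |g₀ x / Z - Real.exp (-V x) / ZV| ∂P) := by
          rw [integral_add hint_fg0 hintBC, integral_add hintB hintC]
      _ ≤ 2 * ε' + (2 * ε' + ε') := add_le_add hfg₀ (add_le_add hterm2 hterm3)
      _ = 5 * ε' := by ring
  -- conclude
  have htv : tvDist Qstar (gibbs P V) ≤ ∫ x, |f x - Real.exp (-V x) / ZV| ∂P := by
    rw [hfrep]
    have hgibbs : gibbs P V = P.withDensity fun x => ENNReal.ofReal (Real.exp (-V x) / ZV) :=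
      rfl
    rw [hgibbs]
    exact tvDist_le_L1 P f _ hf_int hint2 hf0 (fun x => by positivity)
  calc tvDist Qstar (gibbs P V) ≤ ∫ x, |f x - Real.exp (-V x) / ZV| ∂P := htv
    _ ≤ 5 * ε' := hkey
    _ < ε := by rw [hε'def]; linarith
end

section
/- Let P and Q* be probability measures supported on a compact set K ⊆ ℝ^d, let ρ0 be a probability measure on ℝ^{d+1}, and assume the feature map (w, x) ↦ σ(w·x̃) is measurable and uniformly bounded on (support of ρ0) × K, where x̃ = (x,1). For a ∈ L²(ρ0) let V_a(x) = ∫ a(w) σ(w·x̃) dρ0(w) and L(a) = ∫ V_a dQ* + log ∫ e^{-V_a} dP. Suppose Q* = Q_{V_{a*}} for some a* ∈ L²(ρ0). Let t ↦ a_t be a differentiable curve in L²(ρ0) satisfying the gradient flow d a_t/dt = −g(a_t), where g(a)(w) = ∫ σ(w·x̃) d(Q* − Q_{V_a})(x). Then for all t > 0, L(a_t) − L(a*) ≤ ‖a* − a_0‖²_{L²(ρ0)} / (2t); equivalently, KL(Q* ‖ Q_{V_{a_t}}) ≤ ‖a* − a_0‖²_{L²(ρ0)} / (2t). -/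
open MeasureTheory Real
open scoped BigOperators ENNReal NNReal
set_option linter.unusedSectionVars false
set_option linter.unusedVariables false
set_option maxHeartbeats 1000000

/-- `w · x̃` where `x̃ = (x, 1) ∈ ℝ^{d+1}`. -/
def dotTilde {d : ℕ} (w : Fin (d + 1) → ℝ) (x : Fin d → ℝ) : ℝ :=
  (∑ i : Fin d, w i.castSucc * x i) + w (Fin.last d)

/-- The random feature potential `V_a(x) = ∫ a(w) σ(w·x̃) dρ₀(w)`. -/
noncomputable def rfPotential {d : ℕ} (ρ0 : Measure (Fin (d + 1) → ℝ)) (σ : ℝ → ℝ)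
    (a : (Fin (d + 1) → ℝ) → ℝ) (x : Fin d → ℝ) : ℝ :=
  ∫ w, a w * σ (dotTilde w x) ∂ρ0

/-- The population objective `L(a) = ∫ V_a dQ* + log ∫ e^{-V_a} dP`. -/
noncomputable def rfObjective {d : ℕ} (P Qstar : Measure (Fin d → ℝ))
    (ρ0 : Measure (Fin (d + 1) → ℝ)) (σ : ℝ → ℝ)
    (a : (Fin (d + 1) → ℝ) → ℝ) : ℝ :=
  (∫ x, rfPotential ρ0 σ a x ∂Qstar) +
    Real.log (∫ x, Real.exp (-(rfPotential ρ0 σ a x)) ∂P)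

namespace RFT

variable {d : ℕ} {K : Set (Fin d → ℝ)} {P : Measure (Fin d → ℝ)}
  {ρ0 : Measure (Fin (d + 1) → ℝ)} {σ : ℝ → ℝ} {C : ℝ}

lemma measurable_dot : Measurable fun p : (Fin (d+1) → ℝ) × (Fin d → ℝ) => dotTilde p.1 p.2 := by
  unfold dotTilde
  apply Measurable.add
  · exact Finset.measurable_sum _ fun i _ =>
      ((measurable_pi_apply _).comp measurable_fst).mul ((measurable_pi_apply _).comp measurable_snd)
  · exact (measurable_pi_apply _).comp measurable_fst

lemma measurable_dot_right (hσ : Measurable σ) (x : Fin d → ℝ) :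
    Measurable fun w : Fin (d+1) → ℝ => σ (dotTilde w x) :=
  hσ.comp (measurable_dot.comp (measurable_id.prodMk measurable_const))

lemma stronglyMeasurable_rfPotential [SFinite ρ0] (hσ : Measurable σ) {b : (Fin (d+1) → ℝ) → ℝ}
    (hb : AEStronglyMeasurable b ρ0) :
    StronglyMeasurable (rfPotential ρ0 σ b) := by
  have heq : rfPotential ρ0 σ b = fun x => ∫ w, hb.mk b w * σ (dotTilde w x) ∂ρ0 :=
    funext fun x => integral_congr_ae (hb.ae_eq_mk.mono fun w hw => by simp only [hw])
  rw [heq]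
  exact StronglyMeasurable.integral_prod_right (f := fun (x : Fin d → ℝ) w => hb.mk b w * σ (dotTilde w x))
    (((hb.stronglyMeasurable_mk.measurable.comp measurable_snd).mul
      (hσ.comp (measurable_dot.comp measurable_swap))).stronglyMeasurable)

/-- The integral of `g` against `gibbs P V`. -/
lemma integral_gibbs {V : (Fin d → ℝ) → ℝ} (hV : Measurable V) (g : (Fin d → ℝ) → ℝ) :
    ∫ x, g x ∂(gibbs P V) =
      ∫ x, (Real.exp (-(V x)) / (∫ y, Real.exp (-(V y)) ∂P)) * g x ∂P := by
  set Z := ∫ y, Real.exp (-(V y)) ∂P with hZ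
  have hZ0 : 0 ≤ Z := integral_nonneg fun y => (Real.exp_pos _).le
  have hmeas : Measurable fun x => Real.toNNReal (Real.exp (-(V x)) / Z) :=
    ((Real.measurable_exp.comp hV.neg).div_const _).real_toNNReal
  have hg : gibbs P V = P.withDensity fun x =>
      (Real.toNNReal (Real.exp (-(V x)) / Z) : ℝ≥0∞) := rfl
  rw [hg, integral_withDensity_eq_integral_smul hmeas]
  congr 1
  funext x
  rw [NNReal.smul_def, Real.coe_toNNReal _ (by positivity), smul_eq_mul]

lemma gibbs_ac {V : (Fin d → ℝ) → ℝ} : gibbs P V ≪ P :=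
  withDensity_absolutelyContinuous P _

instance gibbs_sfinite {X : Type*} [MeasurableSpace X] (P : Measure X) [SFinite P] (V : X → ℝ) :
    SFinite (gibbs P V) := by
  unfold gibbs; infer_instance

lemma ae_memK' {Q : Measure (Fin d → ℝ)} (hQ : Q Kᶜ = 0) : ∀ᵐ x ∂Q, x ∈ K := by
  rw [ae_iff]; exact hQ

lemma ae_fst_prop {α β : Type*} [MeasurableSpace α] [MeasurableSpace β]
    {μ : Measure α} {ν : Measure β} [SFinite ν] {p : α → Prop} (h : ∀ᵐ x ∂μ, p x) :
    ∀ᵐ z ∂μ.prod ν, p z.1 :=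
  MeasureTheory.Measure.quasiMeasurePreserving_fst.ae h

lemma ae_snd_prop {α β : Type*} [MeasurableSpace α] [MeasurableSpace β]
    {μ : Measure α} {ν : Measure β} [SFinite μ] [SFinite ν] {p : β → Prop} (h : ∀ᵐ x ∂ν, p x) :
    ∀ᵐ z ∂μ.prod ν, p z.2 :=
  MeasureTheory.Measure.quasiMeasurePreserving_snd.ae h

section main
variable (hσ : Measurable σ) (hC : 0 ≤ C)
  (hbdd : ∀ᵐ w ∂ρ0, ∀ x ∈ K, |σ (dotTilde w x)| ≤ C) (hP : P Kᶜ = 0)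

include hσ hbdd

lemma integrable_rf [IsProbabilityMeasure ρ0] {b : (Fin (d+1) → ℝ) → ℝ}
    (hb : Integrable b ρ0) {x : Fin d → ℝ} (hx : x ∈ K) :
    Integrable (fun w => b w * σ (dotTilde w x)) ρ0 := by
  apply Integrable.mono' (hb.abs.const_mul C)
    (hb.aestronglyMeasurable.mul (measurable_dot_right hσ x).aestronglyMeasurable)
  filter_upwards [hbdd] with w hw
  rw [Pi.mul_apply, norm_mul]
  calc ‖b w‖ * ‖σ (dotTilde w x)‖ ≤ ‖b w‖ * C := by
        exact mul_le_mul_of_nonneg_left (hw x hx) (norm_nonneg _)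
    _ = C * |b w| := by rw [Real.norm_eq_abs]; ring

lemma abs_rfPotential_le [IsProbabilityMeasure ρ0] {b : (Fin (d+1) → ℝ) → ℝ}
    (hb : Integrable b ρ0) {x : Fin d → ℝ} (hx : x ∈ K) :
    |rfPotential ρ0 σ b x| ≤ C * ∫ w, |b w| ∂ρ0 := by
  rw [← Real.norm_eq_abs]
  calc ‖rfPotential ρ0 σ b x‖ ≤ ∫ w, ‖b w * σ (dotTilde w x)‖ ∂ρ0 :=
        norm_integral_le_integral_norm _
    _ ≤ ∫ w, C * |b w| ∂ρ0 := by
        apply integral_mono_ae (integrable_rf hσ hbdd hb hx).norm (hb.abs.const_mul C)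
        filter_upwards [hbdd] with w hw
        rw [norm_mul, Real.norm_eq_abs, Real.norm_eq_abs]
        calc |b w| * |σ (dotTilde w x)| ≤ |b w| * C :=
              mul_le_mul_of_nonneg_left (hw x hx) (abs_nonneg _)
          _ = C * |b w| := mul_comm _ _
    _ = C * ∫ w, |b w| ∂ρ0 := integral_const_mul _ _

/-- integrability of `V_b` against any probability measure supported in `K`. -/
lemma integrable_V [IsProbabilityMeasure ρ0] {b : (Fin (d+1) → ℝ) → ℝ}
    (hb : MemLp b 2 ρ0) {Q : Measure (Fin d → ℝ)} [IsProbabilityMeasure Q] (hQ : Q Kᶜ = 0) :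
    Integrable (rfPotential ρ0 σ b) Q := by
  have hbi : Integrable b ρ0 := hb.integrable (by norm_num)
  apply Integrable.mono' (integrable_const (C * ∫ w, |b w| ∂ρ0))
    (stronglyMeasurable_rfPotential hσ hb.aestronglyMeasurable).aestronglyMeasurable
  filter_upwards [ae_memK' hQ] with x hx
  rw [Real.norm_eq_abs]
  exact abs_rfPotential_le hσ hbdd hbi hx

omit hσ hbdd in
/-- `|∫ σ(w·x̃) dQ| ≤ C` pointwise in good `w`, for any probability `Q` supported in `K`. -/
lemma abs_hfun_le_of_good {Q : Measure (Fin d → ℝ)} [IsProbabilityMeasure Q] (hQ : Q Kᶜ = 0)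
    {w : Fin (d+1) → ℝ} (hw : ∀ x ∈ K, |σ (dotTilde w x)| ≤ C) :
    |∫ x, σ (dotTilde w x) ∂Q| ≤ C := by
  rw [← Real.norm_eq_abs]
  calc ‖∫ x, σ (dotTilde w x) ∂Q‖ ≤ ∫ _x, C ∂Q := by
        apply norm_integral_le_of_norm_le (integrable_const C)
        filter_upwards [ae_memK' hQ] with x hx
        rw [Real.norm_eq_abs]; exact hw x hx
    _ = C := by simp

omit hbdd in
lemma measurable_hfun (Q : Measure (Fin d → ℝ)) [SFinite Q] :
    Measurable fun w => ∫ x, σ (dotTilde w x) ∂Q :=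
  (StronglyMeasurable.integral_prod_right
    (f := fun (w : Fin (d+1) → ℝ) (x : Fin d → ℝ) => σ (dotTilde w x))
    (hσ.comp measurable_dot).stronglyMeasurable).measurable

/-- Fubini: `∫ V_b dQ = ∫ b(w) h_Q(w) dρ0`. -/
lemma integral_rfPotential [IsProbabilityMeasure ρ0] {b : (Fin (d+1) → ℝ) → ℝ}
    (hb : Integrable b ρ0) (Q : Measure (Fin d → ℝ)) [IsProbabilityMeasure Q]
    (hQ : Q Kᶜ = 0) :
    ∫ x, rfPotential ρ0 σ b x ∂Q = ∫ w, b w * ∫ x, σ (dotTilde w x) ∂Q ∂ρ0 := by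
  have hint : Integrable (Function.uncurry fun (x : Fin d → ℝ) (w : Fin (d+1) → ℝ) =>
      b w * σ (dotTilde w x)) (Q.prod ρ0) := by
    apply Integrable.mono' (g := fun p : (Fin d → ℝ) × (Fin (d+1) → ℝ) => C * |b p.2|)
    · have h1 : Integrable (fun w => C * |b w|) ρ0 := hb.abs.const_mul C
      have h2 : MeasurePreserving (Prod.snd) (Q.prod ρ0) ρ0 :=
        ⟨measurable_snd, by simp⟩
      exact h2.integrable_comp h1.aestronglyMeasurable |>.mpr h1
    · exact ((hb.aestronglyMeasurable.comp_quasiMeasurePreserving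
          MeasureTheory.Measure.quasiMeasurePreserving_snd).mul
        ((hσ.comp (measurable_dot.comp measurable_swap)).aestronglyMeasurable))
    · filter_upwards [ae_fst_prop (ae_memK' hQ), ae_snd_prop hbdd] with p hp1 hp2
      rw [Function.uncurry, norm_mul, Real.norm_eq_abs, Real.norm_eq_abs]
      calc |b p.2| * |σ (dotTilde p.2 p.1)| ≤ |b p.2| * C :=
            mul_le_mul_of_nonneg_left (hp2 p.1 hp1) (abs_nonneg _)
        _ = C * |b p.2| := mul_comm _ _
  calc ∫ x, rfPotential ρ0 σ b x ∂Q
      = ∫ x, ∫ w, b w * σ (dotTilde w x) ∂ρ0 ∂Q := rfl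
    _ = ∫ w, ∫ x, b w * σ (dotTilde w x) ∂Q ∂ρ0 := integral_integral_swap hint
    _ = ∫ w, b w * ∫ x, σ (dotTilde w x) ∂Q ∂ρ0 := by
        congr 1; funext w; exact integral_const_mul _ _


include hP in
lemma integrable_exp_neg_V [IsProbabilityMeasure P] [IsProbabilityMeasure ρ0]
    {b : (Fin (d+1) → ℝ) → ℝ} (hb : MemLp b 2 ρ0) :
    Integrable (fun x => Real.exp (-(rfPotential ρ0 σ b x))) P := by
  have hbi : Integrable b ρ0 := hb.integrable (by norm_num)
  apply Integrable.mono' (integrable_const (Real.exp (C * ∫ w, |b w| ∂ρ0)))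
    (Real.continuous_exp.measurable.comp
      (stronglyMeasurable_rfPotential hσ hb.aestronglyMeasurable).measurable.neg).aestronglyMeasurable
  filter_upwards [ae_memK' hP] with x hx
  have := abs_rfPotential_le hσ hbdd hbi hx
  simp only [Function.comp_apply, Pi.neg_apply, Real.norm_eq_abs, abs_of_pos (Real.exp_pos _), Real.exp_le_exp]
  linarith [abs_le.1 this]

include hP in
lemma Z_ge [IsProbabilityMeasure P] [IsProbabilityMeasure ρ0]
    {b : (Fin (d+1) → ℝ) → ℝ} (hb : MemLp b 2 ρ0) :
    Real.exp (-(C * ∫ w, |b w| ∂ρ0)) ≤ ∫ x, Real.exp (-(rfPotential ρ0 σ b x)) ∂P := by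
  have hbi : Integrable b ρ0 := hb.integrable (by norm_num)
  have := integral_mono_ae (μ := P) (integrable_const (Real.exp (-(C * ∫ w, |b w| ∂ρ0))))
    (integrable_exp_neg_V hσ hbdd hP hb) ?_
  · simpa using this
  · filter_upwards [ae_memK' hP] with x hx
    have := abs_rfPotential_le hσ hbdd hbi hx
    rw [Real.exp_le_exp]
    linarith [abs_le.1 this]

include hP in
lemma Z_pos [IsProbabilityMeasure P] [IsProbabilityMeasure ρ0]
    {b : (Fin (d+1) → ℝ) → ℝ} (hb : MemLp b 2 ρ0) :
    0 < ∫ x, Real.exp (-(rfPotential ρ0 σ b x)) ∂P :=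
  lt_of_lt_of_le (Real.exp_pos _) (Z_ge hσ hbdd hP hb)

include hP in
lemma gibbs_isProb [IsProbabilityMeasure P] [IsProbabilityMeasure ρ0]
    {b : (Fin (d+1) → ℝ) → ℝ} (hb : MemLp b 2 ρ0) :
    IsProbabilityMeasure (gibbs P (rfPotential ρ0 σ b)) := by
  set Z := ∫ x, Real.exp (-(rfPotential ρ0 σ b x)) ∂P with hZ
  have hZpos : 0 < Z := Z_pos hσ hbdd hP hb
  constructor
  rw [gibbs, withDensity_apply _ MeasurableSet.univ, Measure.restrict_univ,
    ← ofReal_integral_eq_lintegral_ofReal]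
  · rw [integral_div, ← hZ, div_self hZpos.ne', ENNReal.ofReal_one]
  · exact (integrable_exp_neg_V hσ hbdd hP hb).div_const _
  · filter_upwards with x
    positivity

lemma integrable_mul_hfun [IsProbabilityMeasure ρ0] {b : (Fin (d+1) → ℝ) → ℝ}
    (hb : Integrable b ρ0) {Q : Measure (Fin d → ℝ)} [IsProbabilityMeasure Q] (hQ : Q Kᶜ = 0) :
    Integrable (fun w => b w * ∫ x, σ (dotTilde w x) ∂Q) ρ0 := by
  apply Integrable.mono' (hb.abs.const_mul C)
    (hb.aestronglyMeasurable.mul (measurable_hfun hσ Q).aestronglyMeasurable)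
  filter_upwards [hbdd] with w hw
  rw [Pi.mul_apply, norm_mul, Real.norm_eq_abs, Real.norm_eq_abs]
  calc |b w| * |∫ x, σ (dotTilde w x) ∂Q| ≤ |b w| * C :=
        mul_le_mul_of_nonneg_left (abs_hfun_le_of_good hQ hw) (abs_nonneg _)
    _ = C * |b w| := mul_comm _ _

include hP in
/-- Bregman/convexity inequality: `L(c) + ⟨g(c), b - c⟩ ≤ L(b)`. -/
lemma bregman [IsProbabilityMeasure P] [IsProbabilityMeasure ρ0]
    {Qs : Measure (Fin d → ℝ)} [IsProbabilityMeasure Qs] (hQs : Qs Kᶜ = 0)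
    {b c : (Fin (d+1) → ℝ) → ℝ} (hb : MemLp b 2 ρ0) (hc : MemLp c 2 ρ0) :
    rfObjective P Qs ρ0 σ c + (∫ w, (b w - c w) *
        ((∫ x, σ (dotTilde w x) ∂Qs)
          - ∫ x, σ (dotTilde w x) ∂(gibbs P (rfPotential ρ0 σ c))) ∂ρ0)
      ≤ rfObjective P Qs ρ0 σ b := by
  have hbi : Integrable b ρ0 := hb.integrable (by norm_num)
  have hci : Integrable c ρ0 := hc.integrable (by norm_num)
  have hbci : Integrable (fun w => b w - c w) ρ0 := hbi.sub hci
  unfold rfObjective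
  set Vb := rfPotential ρ0 σ b with hVb
  set Vc := rfPotential ρ0 σ c with hVc
  have hVbm : Measurable Vb := (stronglyMeasurable_rfPotential hσ hb.aestronglyMeasurable).measurable
  have hVcm : Measurable Vc := (stronglyMeasurable_rfPotential hσ hc.aestronglyMeasurable).measurable
  set Zb := ∫ x, Real.exp (-(Vb x)) ∂P with hZb
  set Zc := ∫ x, Real.exp (-(Vc x)) ∂P with hZc
  have hZb_pos : 0 < Zb := Z_pos hσ hbdd hP hb
  have hZc_pos : 0 < Zc := Z_pos hσ hbdd hP hc
  set Qc := gibbs P Vc with hQcdef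
  haveI hQcprob : IsProbabilityMeasure Qc := gibbs_isProb hσ hbdd hP hc
  have hQcK : Qc Kᶜ = 0 := gibbs_ac hP
  -- Step A : `∫ exp (-(Vb - Vc)) dQc = Zb / Zc`
  have hA : ∫ x, Real.exp (-(Vb x - Vc x)) ∂Qc = Zb / Zc := by
    calc ∫ x, Real.exp (-(Vb x - Vc x)) ∂Qc
        = ∫ x, (Real.exp (-(Vc x)) / Zc) * Real.exp (-(Vb x - Vc x)) ∂P :=
          integral_gibbs hVcm _
      _ = ∫ x, Real.exp (-(Vb x)) / Zc ∂P := by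
          congr 1; funext x
          rw [div_mul_eq_mul_div, ← Real.exp_add]
          ring_nf
      _ = Zb / Zc := by rw [integral_div]
  -- Step B : Jensen's inequality
  have hfint : Integrable (fun x => -(Vb x - Vc x)) Qc :=
    ((integrable_V hσ hbdd hb hQcK).sub (integrable_V hσ hbdd hc hQcK)).neg
  have hgint : Integrable (fun x => Real.exp (-(Vb x - Vc x))) Qc := by
    apply Integrable.mono'
      (integrable_const (Real.exp ((C * ∫ w, |b w| ∂ρ0) + C * ∫ w, |c w| ∂ρ0)))
      (Real.continuous_exp.measurable.comp (hVbm.sub hVcm).neg).aestronglyMeasurable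
    filter_upwards [ae_memK' hQcK] with x hx
    have h1 := abs_rfPotential_le hσ hbdd hbi hx
    have h2 := abs_rfPotential_le hσ hbdd hci hx
    simp only [Function.comp_apply, Pi.neg_apply, Pi.sub_apply, Real.norm_eq_abs, abs_of_pos (Real.exp_pos _),
      Real.exp_le_exp]
    obtain ⟨l1, r1⟩ := abs_le.1 h1
    obtain ⟨l2, r2⟩ := abs_le.1 h2
    linarith
  have hB : Real.exp (∫ x, -(Vb x - Vc x) ∂Qc) ≤ ∫ x, Real.exp (-(Vb x - Vc x)) ∂Qc := by
    have := ConvexOn.map_integral_le (μ := Qc) (s := Set.univ)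
      (f := fun x => -(Vb x - Vc x)) (g := Real.exp) convexOn_exp
      Real.continuous_exp.continuousOn isClosed_univ
      (by filter_upwards with x using Set.mem_univ _) hfint (by exact hgint)
    exact this
  -- Step C : `-(∫ (Vb - Vc) dQc) ≤ log Zb - log Zc`
  have hVbVcQc : Integrable (fun x => Vb x - Vc x) Qc :=
    (integrable_V hσ hbdd hb hQcK).sub (integrable_V hσ hbdd hc hQcK)
  have hC2 : -(∫ x, (Vb x - Vc x) ∂Qc) ≤ Real.log Zb - Real.log Zc := by
    have h1 : Real.exp (∫ x, -(Vb x - Vc x) ∂Qc) ≤ Zb / Zc := hA ▸ hB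
    have h2 : Real.log (Real.exp (∫ x, -(Vb x - Vc x) ∂Qc)) ≤ Real.log (Zb / Zc) :=
      Real.log_le_log (Real.exp_pos _) h1
    rw [Real.log_exp, Real.log_div hZb_pos.ne' hZc_pos.ne', integral_neg] at h2
    rw [integral_sub (integrable_V hσ hbdd hb hQcK) (integrable_V hσ hbdd hc hQcK)] at h2 ⊢
    linarith
  -- Step D : Fubini identities
  have hDQ : ∀ (Q : Measure (Fin d → ℝ)), ∀ (_ : IsProbabilityMeasure Q), Q Kᶜ = 0 →
      (∫ x, Vb x ∂Q) - ∫ x, Vc x ∂Q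
        = ∫ w, (b w - c w) * ∫ x, σ (dotTilde w x) ∂Q ∂ρ0 := by
    intro Q hQp hQ
    rw [hVb, hVc, integral_rfPotential hσ hbdd hbi Q hQ, integral_rfPotential hσ hbdd hci Q hQ,
      ← integral_sub (integrable_mul_hfun hσ hbdd hbi hQ) (integrable_mul_hfun hσ hbdd hci hQ)]
    congr 1; funext w; ring
  have hsplit : (∫ w, (b w - c w) *
        ((∫ x, σ (dotTilde w x) ∂Qs) - ∫ x, σ (dotTilde w x) ∂Qc) ∂ρ0)
      = ((∫ x, Vb x ∂Qs) - ∫ x, Vc x ∂Qs) - ((∫ x, Vb x ∂Qc) - ∫ x, Vc x ∂Qc) := by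
    rw [hDQ Qs inferInstance hQs, hDQ Qc inferInstance hQcK,
      ← integral_sub (integrable_mul_hfun hσ hbdd hbci hQs) (integrable_mul_hfun hσ hbdd hbci hQcK)]
    congr 1; funext w; ring
  have hQcint : (∫ x, Vb x ∂Qc) - (∫ x, Vc x ∂Qc) = ∫ x, (Vb x - Vc x) ∂Qc :=
    (integral_sub (integrable_V hσ hbdd hb hQcK) (integrable_V hσ hbdd hc hQcK)).symm
  rw [hsplit]
  linarith [hC2, hQcint]
end main

/-- `h_Q(w) = ∫ σ(w·x̃) dQ`. -/
noncomputable def hfun {d : ℕ} (σ : ℝ → ℝ) (Q : Measure (Fin d → ℝ))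
    (w : Fin (d + 1) → ℝ) : ℝ :=
  ∫ x, σ (dotTilde w x) ∂Q

/-- The gradient of the objective at time `s` along the flow. -/
lemma hfun_def {d : ℕ} (σ : ℝ → ℝ) (Q : Measure (Fin d → ℝ)) (w : Fin (d + 1) → ℝ) :
    hfun σ Q w = ∫ x, σ (dotTilde w x) ∂Q := rfl

noncomputable def Gvec {d : ℕ} (P : Measure (Fin d → ℝ)) (ρ0 : Measure (Fin (d + 1) → ℝ))
    (σ : ℝ → ℝ) (Qs : Measure (Fin d → ℝ)) (a : ℝ → (Fin (d + 1) → ℝ) → ℝ) (s : ℝ)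
    (w : Fin (d + 1) → ℝ) : ℝ :=
  hfun σ Qs w - hfun σ (gibbs P (rfPotential ρ0 σ (a s))) w

section flow
variable [IsProbabilityMeasure P] [IsProbabilityMeasure ρ0]
variable (hσ : Measurable σ) (hC : 0 ≤ C)
  (hbdd : ∀ᵐ w ∂ρ0, ∀ x ∈ K, |σ (dotTilde w x)| ≤ C) (hP : P Kᶜ = 0)
  {astar : (Fin (d+1) → ℝ) → ℝ} (hastar : MemLp astar 2 ρ0)
  {a : ℝ → (Fin (d+1) → ℝ) → ℝ} (ha : ∀ t, MemLp (a t) 2 ρ0)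
  {Qs : Measure (Fin d → ℝ)} (hQsP : IsProbabilityMeasure Qs) (hQsK : Qs Kᶜ = 0)
  (hflow : ∀ t : ℝ, ∀ w, HasDerivAt (fun s => a s w) (-(Gvec P ρ0 σ Qs a t w)) t)

include hσ hC hbdd hP hastar ha hQsP hQsK hflow

omit hC hastar hflow in
lemma abs_Gvec_le_of_good {w : Fin (d+1) → ℝ} (hw : ∀ x ∈ K, |σ (dotTilde w x)| ≤ C) (s : ℝ) :
    |Gvec P ρ0 σ Qs a s w| ≤ 2 * C := by
  haveI := hQsP
  haveI : IsProbabilityMeasure (gibbs P (rfPotential ρ0 σ (a s))) := gibbs_isProb hσ hbdd hP (ha s)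
  have h1 : |hfun σ Qs w| ≤ C := abs_hfun_le_of_good hQsK hw
  have h2 : |hfun σ (gibbs P (rfPotential ρ0 σ (a s))) w| ≤ C :=
    abs_hfun_le_of_good (gibbs_ac hP) hw
  calc |Gvec P ρ0 σ Qs a s w| ≤ |hfun σ Qs w| + |hfun σ (gibbs P (rfPotential ρ0 σ (a s))) w| :=
        abs_sub _ _
    _ ≤ 2 * C := by linarith

omit hC hastar in
lemma lip_a {w : Fin (d+1) → ℝ} (hw : ∀ x ∈ K, |σ (dotTilde w x)| ≤ C) (s u : ℝ) :
    |a u w - a s w| ≤ 2 * C * |u - s| := by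
  have := Convex.norm_image_sub_le_of_norm_hasDerivWithin_le
    (f := fun s => a s w) (f' := fun u => -(Gvec P ρ0 σ Qs a u w)) (s := Set.univ)
    (fun x _ => (hflow x w).hasDerivWithinAt)
    (fun x _ => by
      rw [norm_neg, Real.norm_eq_abs]; exact abs_Gvec_le_of_good hσ hbdd hP ha hQsP hQsK hw x)
    convex_univ (Set.mem_univ s) (Set.mem_univ u)
  simpa [Real.norm_eq_abs] using this

omit hC hbdd hP hastar ha hQsP hQsK hflow in
lemma measurable_Gvec [SFinite Qs] (s : ℝ) : Measurable (Gvec P ρ0 σ Qs a s) :=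
  (measurable_hfun hσ Qs).sub (measurable_hfun hσ _)

omit hC hastar hflow in
lemma ae_abs_Gvec_le (s : ℝ) : ∀ᵐ w ∂ρ0, |Gvec P ρ0 σ Qs a s w| ≤ 2 * C := by
  filter_upwards [hbdd] with w hw
  exact abs_Gvec_le_of_good hσ hbdd hP ha hQsP hQsK hw s

omit hC hastar hflow in
lemma integrable_Gvec (s : ℝ) : Integrable (Gvec P ρ0 σ Qs a s) ρ0 := by
  haveI := hQsP
  apply Integrable.mono' (integrable_const (2 * C))
    (measurable_Gvec hσ (a := a) (s := s)).aestronglyMeasurable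
  filter_upwards [ae_abs_Gvec_le hσ hbdd hP ha hQsP hQsK s] with w hw
  rwa [Real.norm_eq_abs]

/-- Derivative of `φ(s) = ‖a_s - a*‖²`. -/
lemma hasDerivAt_phi (s₀ : ℝ) :
    HasDerivAt (fun s => ∫ w, (a s w - astar w) ^ 2 ∂ρ0)
      (∫ w, 2 * (a s₀ w - astar w) * (-(Gvec P ρ0 σ Qs a s₀ w)) ∂ρ0) s₀ := by
  haveI := hQsP
  have key := hasDerivAt_integral_of_dominated_loc_of_deriv_le (x₀ := s₀) (Metric.ball_mem_nhds s₀ one_pos) (μ := ρ0)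
    (F := fun s w => (a s w - astar w) ^ 2)
    (F' := fun s w => 2 * (a s w - astar w) * (-(Gvec P ρ0 σ Qs a s w)))
    (bound := fun w => 4 * C * |a s₀ w - astar w| + 8 * C ^ 2)
    ?_ ?_ ?_ ?_ ?_ ?_
  · exact key.2
  · filter_upwards with s
    have h := (ha s).aestronglyMeasurable.sub hastar.aestronglyMeasurable
    exact (h.mul h).congr (Filter.Eventually.of_forall fun w => by
      simp only [Pi.mul_apply, Pi.sub_apply]; ring)
  · exact ((ha s₀).sub hastar).integrable_sq
  · exact (((ha s₀).aestronglyMeasurable.sub hastar.aestronglyMeasurable).const_mul 2).mul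
      ((measurable_Gvec hσ (a := a) (s := s₀)).neg.aestronglyMeasurable)
  · filter_upwards [hbdd] with w hw s hs
    have h1 : |a s w - astar w| ≤ |a s₀ w - astar w| + 2 * C := by
      have := lip_a hσ hbdd hP ha hQsP hQsK hflow hw s₀ s
      have habs : |s - s₀| ≤ 1 := le_of_lt (by simpa [Real.dist_eq] using Metric.mem_ball.1 hs)
      have : |a s w - a s₀ w| ≤ 2 * C := by
        calc |a s w - a s₀ w| ≤ 2 * C * |s - s₀| :=
              lip_a hσ hbdd hP ha hQsP hQsK hflow hw s₀ s
          _ ≤ 2 * C * 1 := by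
              apply mul_le_mul_of_nonneg_left habs; positivity
          _ = 2 * C := mul_one _
      calc |a s w - astar w| = |(a s₀ w - astar w) + (a s w - a s₀ w)| := by ring_nf
        _ ≤ |a s₀ w - astar w| + |a s w - a s₀ w| := abs_add_le _ _
        _ ≤ |a s₀ w - astar w| + 2 * C := by linarith
    have h2 : |Gvec P ρ0 σ Qs a s w| ≤ 2 * C :=
      abs_Gvec_le_of_good hσ hbdd hP ha hQsP hQsK hw s
    rw [Real.norm_eq_abs, abs_mul, abs_mul, abs_two, abs_neg]
    calc 2 * |a s w - astar w| * |Gvec P ρ0 σ Qs a s w|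
        ≤ 2 * (|a s₀ w - astar w| + 2 * C) * (2 * C) := by
          apply mul_le_mul _ h2 (abs_nonneg _) (by positivity)
          apply mul_le_mul_of_nonneg_left h1 (by norm_num)
      _ = 4 * C * |a s₀ w - astar w| + 8 * C ^ 2 := by ring
  · exact (((ha s₀).sub hastar).integrable (by norm_num)).abs.const_mul (4 * C)
      |>.add (integrable_const _)
  · filter_upwards with w s _
    have h1 : HasDerivAt (fun s => a s w - astar w) (-(Gvec P ρ0 σ Qs a s w)) s :=
      (hflow s w).sub_const _
    have := h1.fun_pow 2
    refine this.congr_deriv ?_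
    push_cast
    ring

/-- Derivative of `s ↦ ∫ V_{a_s} dQs`. -/
lemma hasDerivAt_A (s₀ : ℝ) :
    HasDerivAt (fun s => ∫ x, rfPotential ρ0 σ (a s) x ∂Qs)
      (∫ w, (-(Gvec P ρ0 σ Qs a s₀ w)) * hfun σ Qs w ∂ρ0) s₀ := by
  haveI := hQsP
  have heq : (fun s => ∫ x, rfPotential ρ0 σ (a s) x ∂Qs)
      = fun s => ∫ w, a s w * hfun σ Qs w ∂ρ0 := by
    funext s
    exact integral_rfPotential hσ hbdd ((ha s).integrable (by norm_num)) Qs hQsK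
  rw [heq]
  have key := hasDerivAt_integral_of_dominated_loc_of_deriv_le (x₀ := s₀) (Metric.ball_mem_nhds s₀ one_pos)
    (μ := ρ0) (F := fun s w => a s w * hfun σ Qs w)
    (F' := fun s w => (-(Gvec P ρ0 σ Qs a s w)) * hfun σ Qs w)
    (bound := fun _ => 2 * C * C) ?_ ?_ ?_ ?_ ?_ ?_
  · exact key.2
  · filter_upwards with s
    exact (ha s).aestronglyMeasurable.mul (measurable_hfun hσ Qs).aestronglyMeasurable
  · exact integrable_mul_hfun hσ hbdd ((ha s₀).integrable (by norm_num)) hQsK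
  · exact ((measurable_Gvec hσ (a := a) (s := s₀)).neg.mul
      (measurable_hfun hσ Qs)).aestronglyMeasurable
  · filter_upwards [hbdd] with w hw s _
    rw [Real.norm_eq_abs, abs_mul, abs_neg]
    calc |Gvec P ρ0 σ Qs a s w| * |hfun σ Qs w| ≤ (2 * C) * C :=
          mul_le_mul (abs_Gvec_le_of_good hσ hbdd hP ha hQsP hQsK hw s)
            (abs_hfun_le_of_good hQsK hw) (abs_nonneg _) (by positivity)
      _ = 2 * C * C := by ring
  · exact integrable_const _
  · filter_upwards with w s _
    exact (hflow s w).mul_const _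

/-- Derivative of `s ↦ V_{a_s}(x)` for `x ∈ K`. -/
lemma hasDerivAt_V (s₀ : ℝ) {x : Fin d → ℝ} (hx : x ∈ K) :
    HasDerivAt (fun s => rfPotential ρ0 σ (a s) x)
      (rfPotential ρ0 σ (fun w => -(Gvec P ρ0 σ Qs a s₀ w)) x) s₀ := by
  haveI := hQsP
  have key := hasDerivAt_integral_of_dominated_loc_of_deriv_le (x₀ := s₀) (Metric.ball_mem_nhds s₀ one_pos)
    (μ := ρ0) (F := fun s w => a s w * σ (dotTilde w x))
    (F' := fun s w => (-(Gvec P ρ0 σ Qs a s w)) * σ (dotTilde w x))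
    (bound := fun _ => 2 * C * C) ?_ ?_ ?_ ?_ ?_ ?_
  · exact key.2
  · filter_upwards with s
    exact (ha s).aestronglyMeasurable.mul (measurable_dot_right hσ x).aestronglyMeasurable
  · exact integrable_rf hσ hbdd ((ha s₀).integrable (by norm_num)) hx
  · exact ((measurable_Gvec hσ (a := a) (s := s₀)).neg.mul
      (measurable_dot_right hσ x)).aestronglyMeasurable
  · filter_upwards [hbdd] with w hw s _
    rw [Real.norm_eq_abs, abs_mul, abs_neg]
    calc |Gvec P ρ0 σ Qs a s w| * |σ (dotTilde w x)| ≤ (2 * C) * C :=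
          mul_le_mul (abs_Gvec_le_of_good hσ hbdd hP ha hQsP hQsK hw s)
            (hw x hx) (abs_nonneg _) (by positivity)
      _ = 2 * C * C := by ring
  · exact integrable_const _
  · filter_upwards with w s _
    exact (hflow s w).mul_const _

omit hastar hflow in
lemma abs_DV_le (s₀ : ℝ) {x : Fin d → ℝ} (hx : x ∈ K) :
    |rfPotential ρ0 σ (fun w => -(Gvec P ρ0 σ Qs a s₀ w)) x| ≤ 2 * C * C := by
  haveI := hQsP
  have hrfl : rfPotential ρ0 σ (fun w => -(Gvec P ρ0 σ Qs a s₀ w)) x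
      = ∫ w, (-(Gvec P ρ0 σ Qs a s₀ w)) * σ (dotTilde w x) ∂ρ0 := rfl
  rw [hrfl, ← Real.norm_eq_abs]
  calc ‖∫ w, (-(Gvec P ρ0 σ Qs a s₀ w)) * σ (dotTilde w x) ∂ρ0‖
      ≤ ∫ _w, 2 * C * C ∂ρ0 := by
        apply norm_integral_le_of_norm_le (integrable_const _)
        filter_upwards [hbdd] with w hw
        rw [Real.norm_eq_abs, abs_mul, abs_neg]
        calc |Gvec P ρ0 σ Qs a s₀ w| * |σ (dotTilde w x)| ≤ (2 * C) * C :=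
              mul_le_mul (abs_Gvec_le_of_good hσ hbdd hP ha hQsP hQsK hw s₀)
                (hw x hx) (abs_nonneg _) (by positivity)
          _ = 2 * C * C := by ring
    _ = 2 * C * C := by simp

lemma lip_V {x : Fin d → ℝ} (hx : x ∈ K) (s u : ℝ) :
    |rfPotential ρ0 σ (a u) x - rfPotential ρ0 σ (a s) x| ≤ 2 * C * C * |u - s| := by
  have := Convex.norm_image_sub_le_of_norm_hasDerivWithin_le
    (f := fun s => rfPotential ρ0 σ (a s) x)
    (f' := fun u => rfPotential ρ0 σ (fun w => -(Gvec P ρ0 σ Qs a u w)) x) (s := Set.univ)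
    (fun r _ => (hasDerivAt_V hσ hC hbdd hP hastar ha hQsP hQsK hflow r hx).hasDerivWithinAt)
    (fun r _ => by
      rw [Real.norm_eq_abs]; exact abs_DV_le hσ hC hbdd hP ha hQsP hQsK r hx)
    convex_univ (Set.mem_univ s) (Set.mem_univ u)
  simpa [Real.norm_eq_abs] using this

/-- Derivative of the partition function along the flow. -/
lemma hasDerivAt_Z (s₀ : ℝ) :
    HasDerivAt (fun s => ∫ x, Real.exp (-(rfPotential ρ0 σ (a s) x)) ∂P)
      (∫ x, Real.exp (-(rfPotential ρ0 σ (a s₀) x)) *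
        (-(rfPotential ρ0 σ (fun w => -(Gvec P ρ0 σ Qs a s₀ w)) x)) ∂P) s₀ := by
  haveI := hQsP
  set M := C * ∫ w, |a s₀ w| ∂ρ0 + 2 * C * C with hM
  have key := hasDerivAt_integral_of_dominated_loc_of_deriv_le (x₀ := s₀) (Metric.ball_mem_nhds s₀ one_pos)
    (μ := P) (F := fun s x => Real.exp (-(rfPotential ρ0 σ (a s) x)))
    (F' := fun s x => Real.exp (-(rfPotential ρ0 σ (a s) x)) *
        (-(rfPotential ρ0 σ (fun w => -(Gvec P ρ0 σ Qs a s w)) x)))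
    (bound := fun _ => Real.exp M * (2 * C * C)) ?_ ?_ ?_ ?_ ?_ ?_
  · exact key.2
  · filter_upwards with s
    exact (Real.continuous_exp.measurable.comp
      (stronglyMeasurable_rfPotential hσ (ha s).aestronglyMeasurable).measurable.neg).aestronglyMeasurable
  · exact integrable_exp_neg_V hσ hbdd hP (ha s₀)
  · have hu : AEStronglyMeasurable (fun w => -(Gvec P ρ0 σ Qs a s₀ w)) ρ0 :=
      (measurable_Gvec hσ (a := a) (s := s₀)).neg.aestronglyMeasurable
    exact ((Real.continuous_exp.measurable.comp
      (stronglyMeasurable_rfPotential hσ (ha s₀).aestronglyMeasurable).measurable.neg).mul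
      (stronglyMeasurable_rfPotential hσ hu).measurable.neg).aestronglyMeasurable
  · filter_upwards [ae_memK' hP] with x hx s hs
    have habs : |s - s₀| ≤ 1 := le_of_lt (by simpa [Real.dist_eq] using Metric.mem_ball.1 hs)
    have h1 : |rfPotential ρ0 σ (a s₀) x| ≤ C * ∫ w, |a s₀ w| ∂ρ0 :=
      abs_rfPotential_le hσ hbdd ((ha s₀).integrable (by norm_num)) hx
    have h2 : |rfPotential ρ0 σ (a s) x - rfPotential ρ0 σ (a s₀) x| ≤ 2 * C * C * |s - s₀| :=
      lip_V hσ hC hbdd hP hastar ha hQsP hQsK hflow hx s₀ s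
    have hVbound : -(rfPotential ρ0 σ (a s) x) ≤ M := by
      have h3 : |rfPotential ρ0 σ (a s) x| ≤ C * ∫ w, |a s₀ w| ∂ρ0 + 2 * C * C := by
        calc |rfPotential ρ0 σ (a s) x|
            = |rfPotential ρ0 σ (a s₀) x + (rfPotential ρ0 σ (a s) x - rfPotential ρ0 σ (a s₀) x)| := by
              ring_nf
          _ ≤ |rfPotential ρ0 σ (a s₀) x| + |rfPotential ρ0 σ (a s) x - rfPotential ρ0 σ (a s₀) x| :=
              abs_add_le _ _
          _ ≤ C * ∫ w, |a s₀ w| ∂ρ0 + 2 * C * C := by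
              have : 2 * C * C * |s - s₀| ≤ 2 * C * C * 1 := by
                apply mul_le_mul_of_nonneg_left habs; positivity
              nlinarith
      rw [hM]
      have := (abs_le.1 h3).1
      linarith
    rw [Real.norm_eq_abs, abs_mul, abs_of_pos (Real.exp_pos _)]
    apply mul_le_mul _ _ (abs_nonneg _) (le_of_lt (Real.exp_pos _))
    · exact Real.exp_le_exp.2 hVbound
    · rw [abs_neg]
      exact abs_DV_le hσ hC hbdd hP ha hQsP hQsK s hx
  · exact integrable_const _
  · filter_upwards [ae_memK' hP] with x hx s _
    exact ((hasDerivAt_V hσ hC hbdd hP hastar ha hQsP hQsK hflow s hx).neg).exp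

/-- Derivative of the objective along the flow: `L'(s) = -‖g(a_s)‖²`. -/
lemma hasDerivAt_L (s₀ : ℝ) :
    HasDerivAt (fun s => rfObjective P Qs ρ0 σ (a s))
      (-(∫ w, (Gvec P ρ0 σ Qs a s₀ w) ^ 2 ∂ρ0)) s₀ := by
  haveI := hQsP
  haveI : IsProbabilityMeasure (gibbs P (rfPotential ρ0 σ (a s₀))) :=
    gibbs_isProb hσ hbdd hP (ha s₀)
  have hZpos : 0 < ∫ x, Real.exp (-(rfPotential ρ0 σ (a s₀) x)) ∂P := Z_pos hσ hbdd hP (ha s₀)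
  have hlog := (hasDerivAt_Z hσ hC hbdd hP hastar ha hQsP hQsK hflow s₀).log hZpos.ne'
  have hA := hasDerivAt_A hσ hC hbdd hP hastar ha hQsP hQsK hflow s₀
  have hsum := hA.add hlog
  have hu_int : Integrable (fun w => -(Gvec P ρ0 σ Qs a s₀ w)) ρ0 :=
    (integrable_Gvec hσ hbdd hP ha hQsP hQsK s₀).neg
  have hQt : (gibbs P (rfPotential ρ0 σ (a s₀))) Kᶜ = 0 := gibbs_ac hP
  have hZcalc : (∫ x, Real.exp (-(rfPotential ρ0 σ (a s₀) x)) *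
        (-(rfPotential ρ0 σ (fun w => -(Gvec P ρ0 σ Qs a s₀ w)) x)) ∂P)
        / (∫ x, Real.exp (-(rfPotential ρ0 σ (a s₀) x)) ∂P)
      = - ∫ w, (-(Gvec P ρ0 σ Qs a s₀ w)) *
          hfun σ (gibbs P (rfPotential ρ0 σ (a s₀))) w ∂ρ0 := by
    have hfb : ∫ w, (-(Gvec P ρ0 σ Qs a s₀ w)) *
          hfun σ (gibbs P (rfPotential ρ0 σ (a s₀))) w ∂ρ0
        = ∫ x, rfPotential ρ0 σ (fun w => -(Gvec P ρ0 σ Qs a s₀ w)) x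
            ∂(gibbs P (rfPotential ρ0 σ (a s₀))) :=
      (integral_rfPotential hσ hbdd hu_int _ hQt).symm
    rw [hfb, integral_gibbs
      (stronglyMeasurable_rfPotential hσ (ha s₀).aestronglyMeasurable).measurable, ← integral_neg,
      ← integral_div]
    congr 1
    funext x
    ring
  have hval : (∫ w, (-(Gvec P ρ0 σ Qs a s₀ w)) * hfun σ Qs w ∂ρ0) +
      (∫ x, Real.exp (-(rfPotential ρ0 σ (a s₀) x)) *
        (-(rfPotential ρ0 σ (fun w => -(Gvec P ρ0 σ Qs a s₀ w)) x)) ∂P)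
        / (∫ x, Real.exp (-(rfPotential ρ0 σ (a s₀) x)) ∂P)
      = -(∫ w, (Gvec P ρ0 σ Qs a s₀ w) ^ 2 ∂ρ0) := by
    rw [hZcalc, ← sub_eq_add_neg]
    simp only [hfun_def]
    rw [← integral_sub (integrable_mul_hfun hσ hbdd hu_int hQsK)
        (integrable_mul_hfun hσ hbdd hu_int hQt), ← integral_neg]
    congr 1
    funext w
    simp only [Gvec, hfun_def]
    ring
  exact hval ▸ hsum

end flow

section kl
variable [IsProbabilityMeasure P] [IsProbabilityMeasure ρ0]
variable (hσ : Measurable σ) (hC : 0 ≤ C)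
  (hbdd : ∀ᵐ w ∂ρ0, ∀ x ∈ K, |σ (dotTilde w x)| ≤ C) (hP : P Kᶜ = 0)

include hσ hC hbdd hP

/-- The KL divergence between two Gibbs measures equals the objective gap. -/
lemma klDiv_eq_objective {astar b : (Fin (d+1) → ℝ) → ℝ}
    (hastar : MemLp astar 2 ρ0) (hb : MemLp b 2 ρ0) :
    klDiv (gibbs P (rfPotential ρ0 σ astar)) (gibbs P (rfPotential ρ0 σ b))
      = rfObjective P (gibbs P (rfPotential ρ0 σ astar)) ρ0 σ b
        - rfObjective P (gibbs P (rfPotential ρ0 σ astar)) ρ0 σ astar := by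
  set V1 := rfPotential ρ0 σ astar with hV1
  set V2 := rfPotential ρ0 σ b with hV2
  have hV1m : Measurable V1 := (stronglyMeasurable_rfPotential hσ hastar.aestronglyMeasurable).measurable
  have hV2m : Measurable V2 := (stronglyMeasurable_rfPotential hσ hb.aestronglyMeasurable).measurable
  set Z1 := ∫ x, Real.exp (-(V1 x)) ∂P with hZ1
  set Z2 := ∫ x, Real.exp (-(V2 x)) ∂P with hZ2
  have hZ1pos : 0 < Z1 := Z_pos hσ hbdd hP hastar
  have hZ2pos : 0 < Z2 := Z_pos hσ hbdd hP hb
  set f1 : (Fin d → ℝ) → ℝ≥0∞ := fun x => ENNReal.ofReal (Real.exp (-(V1 x)) / Z1) with hf1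
  set f2 : (Fin d → ℝ) → ℝ≥0∞ := fun x => ENNReal.ofReal (Real.exp (-(V2 x)) / Z2) with hf2
  have hf1m : Measurable f1 := ((Real.measurable_exp.comp hV1m.neg).div_const _).ennreal_ofReal
  have hf2m : Measurable f2 := ((Real.measurable_exp.comp hV2m.neg).div_const _).ennreal_ofReal
  have hf2pos : ∀ x, 0 < Real.exp (-(V2 x)) / Z2 := fun x => div_pos (Real.exp_pos _) hZ2pos
  have hf2ne0 : ∀ x, f2 x ≠ 0 := fun x => (ENNReal.ofReal_pos.2 (hf2pos x)).ne'
  have hf2top : ∀ x, f2 x ≠ ∞ := fun x => ENNReal.ofReal_ne_top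
  haveI hQ1p : IsProbabilityMeasure (gibbs P V1) := gibbs_isProb hσ hbdd hP hastar
  haveI hQ2p : IsProbabilityMeasure (gibbs P V2) := gibbs_isProb hσ hbdd hP hb
  have hprod : (fun x => f2 x * (f1 x / f2 x)) = f1 :=
    funext fun x => ENNReal.mul_div_cancel (hf2ne0 x) (hf2top x)
  have hQ1eq : gibbs P V1 = (gibbs P V2).withDensity (fun x => f1 x / f2 x) := by
    calc gibbs P V1 = P.withDensity f1 := rfl
      _ = P.withDensity (fun x => f2 x * (f1 x / f2 x)) := by rw [hprod]
      _ = (P.withDensity f2).withDensity (fun x => f1 x / f2 x) :=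
          withDensity_mul P hf2m (hf1m.div hf2m)
      _ = (gibbs P V2).withDensity (fun x => f1 x / f2 x) := rfl
  have hrn : (gibbs P V1).rnDeriv (gibbs P V2) =ᵐ[gibbs P V2] fun x => f1 x / f2 x := by
    rw [hQ1eq]
    exact Measure.rnDeriv_withDensity _ (hf1m.div hf2m)
  have hac : gibbs P V1 ≪ gibbs P V2 := by
    intro A hA
    have hA' : P.withDensity f2 A = 0 := hA
    rw [withDensity_apply_eq_zero hf2m] at hA'
    have hs : {x | f2 x ≠ 0} ∩ A = A := by
      ext x; simp [hf2ne0 x]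
    rw [hs] at hA'
    exact gibbs_ac hA'
  have hrn1 : ∀ᵐ x ∂(gibbs P V1),
      ((gibbs P V1).rnDeriv (gibbs P V2)) x = f1 x / f2 x := hac.ae_le hrn
  have hlogeq : ∀ᵐ x ∂(gibbs P V1),
      Real.log (((gibbs P V1).rnDeriv (gibbs P V2)) x).toReal
        = (V2 x - V1 x) + (Real.log Z2 - Real.log Z1) := by
    filter_upwards [hrn1] with x hx
    rw [hx]
    have htr : (f1 x / f2 x).toReal
        = (Real.exp (-(V1 x)) / Z1) / (Real.exp (-(V2 x)) / Z2) := by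
      rw [hf1, hf2, ENNReal.toReal_div, ENNReal.toReal_ofReal (by positivity),
        ENNReal.toReal_ofReal (by positivity)]
    rw [htr]
    have hre : (Real.exp (-(V1 x)) / Z1) / (Real.exp (-(V2 x)) / Z2)
        = Real.exp (V2 x - V1 x) * (Z2 / Z1) := by
      rw [Real.exp_sub, Real.exp_neg, Real.exp_neg]
      field_simp
    rw [hre, Real.log_mul (Real.exp_ne_zero _) (ne_of_gt (div_pos hZ2pos hZ1pos)),
      Real.log_exp, Real.log_div hZ2pos.ne' hZ1pos.ne']
  have hK1 : (gibbs P V1) Kᶜ = 0 := gibbs_ac hP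
  have hint : Integrable (fun x => V2 x - V1 x) (gibbs P V1) :=
    (integrable_V hσ hbdd hb hK1).sub (integrable_V hσ hbdd hastar hK1)
  calc klDiv (gibbs P V1) (gibbs P V2)
      = ∫ x, ((V2 x - V1 x) + (Real.log Z2 - Real.log Z1)) ∂(gibbs P V1) :=
        integral_congr_ae hlogeq
    _ = (∫ x, (V2 x - V1 x) ∂(gibbs P V1)) + (Real.log Z2 - Real.log Z1) := by
        rw [integral_add hint (integrable_const _), integral_const]
        simp
    _ = ((∫ x, V2 x ∂(gibbs P V1)) - ∫ x, V1 x ∂(gibbs P V1)) + (Real.log Z2 - Real.log Z1) := by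
        rw [integral_sub (integrable_V hσ hbdd hb hK1) (integrable_V hσ hbdd hastar hK1)]
    _ = rfObjective P (gibbs P V1) ρ0 σ b - rfObjective P (gibbs P V1) ρ0 σ astar := by
        unfold rfObjective
        rw [← hV1, ← hV2, ← hZ1, ← hZ2]
        ring

end kl

end RFT

open RFT

/-- **trainability of the random feature bias potential model.**
If the target `Q* = Q_{V_{a*}}` is generated by a random feature potential and `a_t`
follows the gradient flow of `L(a) = ∫ V_a dQ* + log ∫ e^{-V_a} dP`, i.e.
`d a_t/dt (w) = −∫ σ(w·x̃) d(Q* − Q_{a_t})(x)`, then for every `t > 0`,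
`L(a_t) − L(a*) ≤ ‖a* − a_0‖²_{L²(ρ₀)} / (2t)`, equivalently
`KL(Q* ‖ Q_{a_t}) ≤ ‖a* − a_0‖²_{L²(ρ₀)} / (2t)`. -/
theorem rf_trainability {d : ℕ}
    (K : Set (Fin d → ℝ)) (hK : IsCompact K)
    (P : Measure (Fin d → ℝ)) [IsProbabilityMeasure P] (hPsupp : P Kᶜ = 0)
    (ρ0 : Measure (Fin (d + 1) → ℝ)) [IsProbabilityMeasure ρ0]
    (σ : ℝ → ℝ) (hσ : Measurable σ)
    (hbdd : ∃ C : ℝ, ∀ᵐ w ∂ρ0, ∀ x ∈ K, |σ (dotTilde w x)| ≤ C)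
    (astar : (Fin (d + 1) → ℝ) → ℝ) (hastar : MemLp astar 2 ρ0)
    (Qstar : Measure (Fin d → ℝ))
    (hQstar : Qstar = gibbs P (rfPotential ρ0 σ astar))
    (a : ℝ → (Fin (d + 1) → ℝ) → ℝ) (ha : ∀ t, MemLp (a t) 2 ρ0)
    (hflow : ∀ t : ℝ, ∀ w, HasDerivAt (fun s => a s w)
      (-((∫ x, σ (dotTilde w x) ∂Qstar)
          - ∫ x, σ (dotTilde w x) ∂(gibbs P (rfPotential ρ0 σ (a t))))) t)
    (t : ℝ) (ht : 0 < t) :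
    rfObjective P Qstar ρ0 σ (a t) - rfObjective P Qstar ρ0 σ astar
        ≤ (∫ w, (astar w - a 0 w) ^ 2 ∂ρ0) / (2 * t) ∧
      klDiv Qstar (gibbs P (rfPotential ρ0 σ (a t)))
        ≤ (∫ w, (astar w - a 0 w) ^ 2 ∂ρ0) / (2 * t) := by
  obtain ⟨C₀, hbdd₀⟩ := hbdd
  subst hQstar
  set C := max C₀ 0 with hCdef
  have hC : 0 ≤ C := le_max_right _ _
  have hbdd : ∀ᵐ w ∂ρ0, ∀ x ∈ K, |σ (dotTilde w x)| ≤ C :=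
    hbdd₀.mono fun w hw x hx => (hw x hx).trans (le_max_left _ _)
  set Qs := gibbs P (rfPotential ρ0 σ astar) with hQsdef
  haveI hQsP : IsProbabilityMeasure Qs := gibbs_isProb hσ hbdd hPsupp hastar
  have hQsK : Qs Kᶜ = 0 := gibbs_ac hPsupp
  have hflow' : ∀ t : ℝ, ∀ w, HasDerivAt (fun s => a s w)
      (-(Gvec P ρ0 σ Qs a t w)) t := hflow
  set L : ℝ → ℝ := fun s => rfObjective P Qs ρ0 σ (a s) with hL
  set Lstar : ℝ := rfObjective P Qs ρ0 σ astar with hLs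
  set φ : ℝ → ℝ := fun s => ∫ w, (a s w - astar w) ^ 2 ∂ρ0 with hφ
  set ψ : ℝ → ℝ := fun s => s * (L s - Lstar) + φ s / 2 with hψ
  -- derivative of ψ
  have hLd : ∀ s, HasDerivAt L (-(∫ w, (Gvec P ρ0 σ Qs a s w) ^ 2 ∂ρ0)) s := fun s =>
    hasDerivAt_L hσ hC hbdd hPsupp hastar ha hQsP hQsK hflow' s
  have hφd : ∀ s, HasDerivAt φ
      (∫ w, 2 * (a s w - astar w) * (-(Gvec P ρ0 σ Qs a s w)) ∂ρ0) s := fun s =>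
    hasDerivAt_phi hσ hC hbdd hPsupp hastar ha hQsP hQsK hflow' s
  have hψd : ∀ s, HasDerivAt ψ
      ((1 * (L s - Lstar) + s * (-(∫ w, (Gvec P ρ0 σ Qs a s w) ^ 2 ∂ρ0)))
        + (∫ w, 2 * (a s w - astar w) * (-(Gvec P ρ0 σ Qs a s w)) ∂ρ0) / 2) s := fun s =>
    ((hasDerivAt_id s).mul ((hLd s).sub_const Lstar)).add ((hφd s).div_const 2)
  -- the derivative is nonpositive on `Ioi 0`
  have hderiv_nonpos : ∀ s ∈ Set.Ioi (0:ℝ),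
      ((1 * (L s - Lstar) + s * (-(∫ w, (Gvec P ρ0 σ Qs a s w) ^ 2 ∂ρ0)))
        + (∫ w, 2 * (a s w - astar w) * (-(Gvec P ρ0 σ Qs a s w)) ∂ρ0) / 2) ≤ 0 := by
    intro s hs
    have hG2 : 0 ≤ ∫ w, (Gvec P ρ0 σ Qs a s w) ^ 2 ∂ρ0 :=
      integral_nonneg fun w => sq_nonneg _
    have hterm2 : s * (-(∫ w, (Gvec P ρ0 σ Qs a s w) ^ 2 ∂ρ0)) ≤ 0 :=
      mul_nonpos_of_nonneg_of_nonpos (le_of_lt hs) (neg_nonpos.2 hG2)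
    have hkey : ∫ w, 2 * (a s w - astar w) * (-(Gvec P ρ0 σ Qs a s w)) ∂ρ0
        = 2 * ∫ w, (astar w - a s w) *
            ((∫ x, σ (dotTilde w x) ∂Qs)
              - ∫ x, σ (dotTilde w x) ∂(gibbs P (rfPotential ρ0 σ (a s)))) ∂ρ0 := by
      rw [← integral_const_mul]
      apply integral_congr_ae (Filter.Eventually.of_forall fun w => ?_)
      simp only [Gvec, hfun_def]
      ring
    have hbreg := bregman hσ hbdd hPsupp hQsK hastar (ha s)
    rw [hkey]
    have hbreg' : (∫ w, (astar w - a s w) *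
        ((∫ x, σ (dotTilde w x) ∂Qs)
          - ∫ x, σ (dotTilde w x) ∂(gibbs P (rfPotential ρ0 σ (a s)))) ∂ρ0)
        ≤ Lstar - L s := by
      have := hbreg
      rw [hL, hLs]
      linarith
    linarith
  -- ψ is antitone on [0, ∞)
  have hanti : AntitoneOn ψ (Set.Ici (0:ℝ)) := by
    apply antitoneOn_of_deriv_nonpos (convex_Ici 0)
    · exact (fun s _ => ((hψd s).differentiableAt).continuousAt.continuousWithinAt)
    · intro s hs
      exact ((hψd s).differentiableAt).differentiableWithinAt
    · intro s hs
      rw [interior_Ici] at hs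
      rw [(hψd s).deriv]
      exact hderiv_nonpos s hs
  have hψt : ψ t ≤ ψ 0 := hanti (Set.self_mem_Ici) (Set.mem_Ici.2 ht.le) ht.le
  have hψ0 : ψ 0 = φ 0 / 2 := by simp [hψ]
  have hφt : 0 ≤ φ t := integral_nonneg fun w => sq_nonneg _
  have hmain : L t - Lstar ≤ φ 0 / (2 * t) := by
    have h1 : t * (L t - Lstar) + φ t / 2 ≤ φ 0 / 2 := by
      rw [← hψ0]; exact hψt
    have h2 : t * (L t - Lstar) ≤ φ 0 / 2 := by linarith
    rw [le_div_iff₀ (by positivity : (0:ℝ) < 2 * t)]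
    nlinarith
  have hφeq : φ 0 = ∫ w, (astar w - a 0 w) ^ 2 ∂ρ0 := by
    rw [hφ]
    apply integral_congr_ae (Filter.Eventually.of_forall fun w => ?_)
    ring
  constructor
  · rw [← hφeq]
    exact hmain
  · rw [klDiv_eq_objective hσ hC hbdd hPsupp hastar (ha t), ← hφeq]
    exact hmain
end

section
/- Let H be a real Hilbert space, let L : H → ℝ be convex and Fréchet differentiable with ‖∇L(x)‖ ≤ l for all x (i.e. Lipschitz constant l), and let h : H → ℝ be Fréchet differentiable with ‖∇h(x)‖ ≤ ε for all x (i.e. Lipschitz constant ε). Let x_t and y_t be differentiable curves in H with x_0 = y_0, dx_t/dt = −∇L(x_t), and dy_t/dt = −∇(L + h)(y_t). Then for all t ≥ 0, L(y_t) − L(x_t) ≤ l ε t. -/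
open MeasureTheory

open MeasureTheory InnerProductSpace

local notation "⟪" a ", " b "⟫" => @inner ℝ _ _ a b

/-- Subgradient inequality for a convex differentiable function. -/
lemma my_subgrad {H : Type*} [NormedAddCommGroup H] [InnerProductSpace ℝ H] [CompleteSpace H]
    (L : H → ℝ) (gL : H → H)
    (hconv : ConvexOn ℝ Set.univ L)
    (hgL : ∀ x, HasGradientAt L (gL x) x) (a b : H) :
    ⟪gL a, b - a⟫ ≤ L b - L a := by
  set c : ℝ → H := fun s => a + s • (b - a) with hc
  have hgderiv : ∀ s : ℝ, HasDerivAt (fun s => L (c s)) ⟪gL (c s), b - a⟫ s := by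
    intro s
    have hf : HasFDerivAt L (toDual ℝ H (gL (c s))) (c s) :=
      (hasGradientAt_iff_hasFDerivAt).1 (hgL (c s))
    have hcd : HasDerivAt c (b - a) s := by
      have : HasDerivAt (fun s : ℝ => s • (b - a)) ((1 : ℝ) • (b - a)) s :=
        (hasDerivAt_id s).smul_const (b - a)
      have h2 := this.const_add a
      simp only [one_smul] at h2
      exact h2
    simpa [InnerProductSpace.toDual_apply_apply, Function.comp_def] using hf.comp_hasDerivAt s hcd
  have hgconv : ConvexOn ℝ Set.univ (fun s : ℝ => L (c s)) := by
    have haff : ConvexOn ℝ ((AffineMap.lineMap a b : ℝ →ᵃ[ℝ] H) ⁻¹' Set.univ)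
        (L ∘ (AffineMap.lineMap a b : ℝ →ᵃ[ℝ] H)) :=
      hconv.comp_affineMap _
    have hfun : (L ∘ (AffineMap.lineMap a b : ℝ →ᵃ[ℝ] H)) = fun s => L (c s) := by
      funext s
      have : (AffineMap.lineMap a b : ℝ →ᵃ[ℝ] H) s = c s := by
        simp [AffineMap.lineMap_apply, c]; module
      simp [Function.comp, this]
    rw [Set.preimage_univ, hfun] at haff
    exact haff
  have := hgconv.le_slope_of_hasDerivAt (Set.mem_univ (0:ℝ)) (Set.mem_univ (1:ℝ))
    (by norm_num) (by simpa using hgderiv 0)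
  simpa [slope_def_field, c] using this

lemma my_mono {H : Type*} [NormedAddCommGroup H] [InnerProductSpace ℝ H] [CompleteSpace H]
    (L : H → ℝ) (gL : H → H)
    (hconv : ConvexOn ℝ Set.univ L)
    (hgL : ∀ x, HasGradientAt L (gL x) x) (a b : H) :
    0 ≤ ⟪gL a - gL b, a - b⟫ := by
  have h1 := my_subgrad L gL hconv hgL a b
  have h2 := my_subgrad L gL hconv hgL b a
  have : ⟪gL a, b - a⟫ + ⟪gL b, a - b⟫ ≤ 0 := by linarith
  have e : ⟪gL a - gL b, a - b⟫ = -(⟪gL a, b - a⟫ + ⟪gL b, a - b⟫) := by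
    simp [inner_sub_left, inner_sub_right]; ring
  linarith [e ▸ neg_nonneg.2 this]

/-- **perturbed convex gradient flow.** Let `L` be a convex Fréchet
differentiable function on a real Hilbert space with gradient bounded by `l` (Lipschitz
constant `l`), and let `h` be Fréchet differentiable with gradient bounded by `ε`.
If `x_t` is the gradient flow of `L` and `y_t` the gradient flow of `L + h` with
`x_0 = y_0`, then `L(y_t) − L(x_t) ≤ l ε t` for all `t ≥ 0`. -/
theorem perturbed_convex_gradient_flow
    {H : Type*} [NormedAddCommGroup H] [InnerProductSpace ℝ H] [CompleteSpace H]
    (L h : H → ℝ) (gL gh : H → H) (l ε : ℝ)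
    (hconv : ConvexOn ℝ Set.univ L)
    (hgL : ∀ x, HasGradientAt L (gL x) x)
    (hgh : ∀ x, HasGradientAt h (gh x) x)
    (hl : ∀ x, ‖gL x‖ ≤ l) (hε : ∀ x, ‖gh x‖ ≤ ε)
    (x y : ℝ → H) (hinit : x 0 = y 0)
    (hx : ∀ t, HasDerivAt x (-gL (x t)) t)
    (hy : ∀ t, HasDerivAt y (-(gL (y t) + gh (y t))) t)
    (t : ℝ) (ht : 0 ≤ t) :
    L (y t) - L (x t) ≤ l * ε * t := by
  
  have ε0 : 0 ≤ ε := le_trans (norm_nonneg _) (hε 0)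
  have l0 : 0 ≤ l := le_trans (norm_nonneg _) (hl 0)
  set u : ℝ → H := fun s => x s - y s with hu_def
  have hu : ∀ s, HasDerivAt u (-gL (x s) - (-(gL (y s) + gh (y s)))) s :=
    fun s => (hx s).sub (hy s)
  set q : ℝ → ℝ := fun s => ⟪u s, u s⟫ with hq_def
  have hqnn : ∀ s, 0 ≤ q s := fun s => real_inner_self_nonneg
  have hqnorm : ∀ s, q s = ‖u s‖ ^ 2 := fun s => real_inner_self_eq_norm_sq (u s)
  have hq : ∀ s, HasDerivAt q
      (⟪u s, -gL (x s) - (-(gL (y s) + gh (y s)))⟫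
        + ⟪-gL (x s) - (-(gL (y s) + gh (y s))), u s⟫) s :=
    fun s => (hu s).inner ℝ (hu s)
  have hqbound : ∀ s, ⟪u s, -gL (x s) - (-(gL (y s) + gh (y s)))⟫
        + ⟪-gL (x s) - (-(gL (y s) + gh (y s))), u s⟫ ≤ 2 * (ε * ‖u s‖) := by
    intro s
    have e1 : (-gL (x s) - (-(gL (y s) + gh (y s)))) = -(gL (x s) - gL (y s)) + gh (y s) := by
      abel
    have hmono := my_mono L gL hconv hgL (x s) (y s)
    have h1 : ⟪u s, -(gL (x s) - gL (y s))⟫ ≤ 0 := by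
      have : ⟪u s, -(gL (x s) - gL (y s))⟫ = -⟪gL (x s) - gL (y s), x s - y s⟫ := by
        rw [inner_neg_right, real_inner_comm]
      rw [this]; linarith
    have h2 : ⟪u s, gh (y s)⟫ ≤ ε * ‖u s‖ := by
      calc ⟪u s, gh (y s)⟫ ≤ ‖u s‖ * ‖gh (y s)‖ := real_inner_le_norm _ _
        _ ≤ ‖u s‖ * ε := by
            exact mul_le_mul_of_nonneg_left (hε _) (norm_nonneg _)
        _ = ε * ‖u s‖ := mul_comm _ _
    have : ⟪u s, -gL (x s) - (-(gL (y s) + gh (y s)))⟫ ≤ ε * ‖u s‖ := by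
      rw [e1, inner_add_right]; linarith
    have hsym : ⟪-gL (x s) - (-(gL (y s) + gh (y s))), u s⟫
        = ⟪u s, -gL (x s) - (-(gL (y s) + gh (y s)))⟫ := real_inner_comm _ _
    rw [hsym]; linarith
  -- key bound on ‖u t‖
  have key : ‖u t‖ ≤ ε * t := by
    refine le_of_forall_pos_le_add ?_
    intro δ hδ
    set ψ : ℝ → ℝ := fun s => Real.sqrt (q s + δ ^ 2) with hψ_def
    have hpos : ∀ s, 0 < q s + δ ^ 2 := fun s => add_pos_of_nonneg_of_pos (hqnn s) (by positivity)
    have hψd : ∀ s, HasDerivAt ψ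
        ((⟪u s, -gL (x s) - (-(gL (y s) + gh (y s)))⟫
          + ⟪-gL (x s) - (-(gL (y s) + gh (y s))), u s⟫)
          / (2 * Real.sqrt (q s + δ ^ 2))) s := by
      intro s
      exact ((hq s).add_const (δ ^ 2)).sqrt (ne_of_gt (hpos s))
    have hψd_le : ∀ s, (⟪u s, -gL (x s) - (-(gL (y s) + gh (y s)))⟫
          + ⟪-gL (x s) - (-(gL (y s) + gh (y s))), u s⟫)
          / (2 * Real.sqrt (q s + δ ^ 2)) ≤ ε := by
      intro s
      have hs : 0 < 2 * Real.sqrt (q s + δ ^ 2) := by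
        have := Real.sqrt_pos.2 (hpos s); linarith
      rw [div_le_iff₀ hs]
      have hnorm_le : ‖u s‖ ≤ Real.sqrt (q s + δ ^ 2) := by
        have : ‖u s‖ = Real.sqrt (q s) := by
          rw [hqnorm s, Real.sqrt_sq (norm_nonneg _)]
        rw [this]
        exact Real.sqrt_le_sqrt (by nlinarith [sq_nonneg δ])
      calc ⟪u s, -gL (x s) - (-(gL (y s) + gh (y s)))⟫
            + ⟪-gL (x s) - (-(gL (y s) + gh (y s))), u s⟫ ≤ 2 * (ε * ‖u s‖) := hqbound s
        _ ≤ 2 * (ε * Real.sqrt (q s + δ ^ 2)) := by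
            exact mul_le_mul_of_nonneg_left (mul_le_mul_of_nonneg_left hnorm_le ε0) (by norm_num)
        _ = ε * (2 * Real.sqrt (q s + δ ^ 2)) := by ring
    have hmono : Monotone (fun s => ε * s - ψ s) := by
      apply monotone_of_deriv_nonneg
      · intro s
        exact ((hasDerivAt_id s).const_mul ε |>.sub (hψd s)).differentiableAt
      · intro s
        have hd : HasDerivAt (fun s => ε * s - ψ s)
            (ε * 1 - (⟪u s, -gL (x s) - (-(gL (y s) + gh (y s)))⟫
              + ⟪-gL (x s) - (-(gL (y s) + gh (y s))), u s⟫)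
              / (2 * Real.sqrt (q s + δ ^ 2))) s :=
          ((hasDerivAt_id s).const_mul ε).sub (hψd s)
        rw [hd.deriv]
        have := hψd_le s
        linarith
    have hm := hmono ht
    simp only [mul_zero, zero_sub] at hm
    have hψ0 : ψ 0 = δ := by
      have : q 0 = 0 := by
        simp [hq_def, hu_def, hinit]
      rw [hψ_def]
      simp only [this, zero_add]
      exact Real.sqrt_sq hδ.le
    have hψt : ψ t ≤ ε * t + δ := by
      rw [hψ0] at hm
      linarith
    have : ‖u t‖ ≤ ψ t := by
      have h1 : ‖u t‖ = Real.sqrt (q t) := by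
        rw [hqnorm t, Real.sqrt_sq (norm_nonneg _)]
      rw [h1, hψ_def]
      exact Real.sqrt_le_sqrt (by nlinarith [sq_nonneg δ])
    linarith
  -- conclude via subgradient inequality
  have hsub := my_subgrad L gL hconv hgL (y t) (x t)
  have h3 : ⟪gL (y t), y t - x t⟫ ≤ ‖gL (y t)‖ * ‖y t - x t‖ := real_inner_le_norm _ _
  have h4 : ‖y t - x t‖ = ‖u t‖ := by rw [hu_def]; exact (norm_sub_rev _ _)
  have h5 : ‖gL (y t)‖ * ‖u t‖ ≤ l * (ε * t) :=
    mul_le_mul (hl _) key (norm_nonneg _) l0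
  have h6 : ⟪gL (y t), y t - x t⟫ = -⟪gL (y t), x t - y t⟫ := by
    rw [← inner_neg_right]; congr 1; abel
  rw [mul_assoc]
  rw [h4] at h3
  linarith
end
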